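/- arXiv:2003.07345 — 12 statements merged into one kernel-verified Lean document; each statement's English description precedes it below -/
import Mathlib

section
/- For a real symmetric matrix A ∈ S^n and d ∈ ℕ, ‖A‖_{γ,d} = 0 if and only if A is a diagonal matrix with trace zero. -/
noncomputable def gammaSemi {ι : Type*} [Fintype ι] (d : ℕ) (A : Matrix ι ι ℝ) : ℝ :=
  sSup { r | ∃ x : ι → EuclideanSpace ℝ (Fin d), (∀ i, ‖x i‖ = 1) ∧
    r = |∑ i, ∑ j, A i j * (inner ℝ (x i) (x j) : ℝ)| }

noncomputable def GammaNorm {ι : Type*} [Fintype ι] (d : ℕ) (A : Matrix ι ι ℝ) : ℝ :=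
  sSup { r | ∃ x : ι → EuclideanSpace ℝ (Fin d), (∀ i, ‖x i‖ ≤ 1) ∧
    r = |∑ i, ∑ j, A i j * (inner ℝ (x i) (x j) : ℝ)| }

noncomputable def GNorm {ι κ : Type*} [Fintype ι] [Fintype κ] (d : ℕ) (B : Matrix ι κ ℝ) : ℝ :=
  sSup { r | ∃ (x : ι → EuclideanSpace ℝ (Fin d)) (y : κ → EuclideanSpace ℝ (Fin d)),
    (∀ i, ‖x i‖ ≤ 1) ∧ (∀ j, ‖y j‖ ≤ 1) ∧
    r = |∑ i, ∑ j, B i j * (inner ℝ (x i) (y j) : ℝ)| }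

theorem quad_expand {n : ℕ} (A : Matrix (Fin n) (Fin n) ℝ) (i j : Fin n) (hij : i ≠ j) (a b : ℝ) :
    (∑ k, ∑ l, A k l * ((1 + (if k = i then a else 0) + (if k = j then b else 0)) *
      (1 + (if l = i then a else 0) + (if l = j then b else 0)))) =
    (∑ k, ∑ l, A k l) + a * (∑ l, A i l) + b * (∑ l, A j l)
      + a * (∑ k, A k i) + b * (∑ k, A k j)
      + a^2 * A i i + b^2 * A j j + a*b*(A i j + A j i) := by
  have hji : j ≠ i := hij.symm
  have h1 : ∀ k, ∑ l, A k l * ((1 + (if k = i then a else 0) + (if k = j then b else 0)) *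
      (1 + (if l = i then a else 0) + (if l = j then b else 0))) =
      (1 + (if k = i then a else 0) + (if k = j then b else 0)) *
      ((∑ l, A k l) + A k i * a + A k j * b) := by
    intro k
    have : ∀ l, A k l * ((1 + (if k = i then a else 0) + (if k = j then b else 0)) *
        (1 + (if l = i then a else 0) + (if l = j then b else 0))) =
        (1 + (if k = i then a else 0) + (if k = j then b else 0)) *
        (A k l + (if l = i then A k l * a else 0) + (if l = j then A k l * b else 0)) := by
      intro l
      by_cases h1 : l = i <;> by_cases h2 : l = j <;>
        simp [h1, h2, hij, hji] <;> ring
    simp only [this, ← Finset.mul_sum]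
    congr 1
    simp [Finset.sum_add_distrib, Finset.sum_ite_eq']
  simp only [h1]
  have h2 : ∀ k, (1 + (if k = i then a else 0) + (if k = j then b else 0)) *
      ((∑ l, A k l) + A k i * a + A k j * b) =
      ((∑ l, A k l) + A k i * a + A k j * b)
      + (if k = i then a * ((∑ l, A k l) + A k i * a + A k j * b) else 0)
      + (if k = j then b * ((∑ l, A k l) + A k i * a + A k j * b) else 0) := by
    intro k
    by_cases g1 : k = i <;> by_cases g2 : k = j <;> simp [g1, g2, hij, hji] <;> ring
  simp only [h2, Finset.sum_add_distrib, Finset.sum_ite_eq', Finset.mem_univ, if_true]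
  simp only [← Finset.sum_mul]
  ring

/-- ‖A‖_{γ,d} = 0 iff A is diagonal with zero trace. -/
theorem gammaSemi_eq_zero_iff (n d : ℕ) (hd : 1 ≤ d)
    (A : Matrix (Fin n) (Fin n) ℝ) (hA : A.IsSymm) :
    gammaSemi d A = 0 ↔ ((∀ i j, i ≠ j → A i j = 0) ∧ A.trace = 0) := by
  classical
  set S : Set ℝ := { r | ∃ x : Fin n → EuclideanSpace ℝ (Fin d), (∀ i, ‖x i‖ = 1) ∧
    r = |∑ i, ∑ j, A i j * (inner ℝ (x i) (x j) : ℝ)| } with hS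
  have hgam : gammaSemi d A = sSup S := rfl
  set e : EuclideanSpace ℝ (Fin d) := EuclideanSpace.single ⟨0, hd⟩ (1:ℝ) with he
  have hne : ‖e‖ = 1 := by simp [he]
  have hee : (inner ℝ e e : ℝ) = 1 := by rw [real_inner_self_eq_norm_sq, hne]; norm_num
  have htrace : A.trace = ∑ i, A i i := rfl
  constructor
  · intro h
    -- the set is bounded above
    have hbdd : BddAbove S := by
      refine ⟨∑ i, ∑ j, |A i j|, ?_⟩
      rintro r ⟨x, hx, rfl⟩
      calc |∑ i, ∑ j, A i j * (inner ℝ (x i) (x j) : ℝ)|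
          ≤ ∑ i, |∑ j, A i j * (inner ℝ (x i) (x j) : ℝ)| := Finset.abs_sum_le_sum_abs _ _
        _ ≤ ∑ i, ∑ j, |A i j * (inner ℝ (x i) (x j) : ℝ)| := by
            exact Finset.sum_le_sum fun i _ => Finset.abs_sum_le_sum_abs _ _
        _ ≤ ∑ i, ∑ j, |A i j| := by
            refine Finset.sum_le_sum fun i _ => Finset.sum_le_sum fun j _ => ?_
            rw [abs_mul]
            calc |A i j| * |(inner ℝ (x i) (x j) : ℝ)|
                ≤ |A i j| * (‖x i‖ * ‖x j‖) :=
                  mul_le_mul_of_nonneg_left (abs_real_inner_le_norm _ _) (abs_nonneg _)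
              _ = |A i j| := by rw [hx i, hx j]; ring
    have hzero : ∀ ε : Fin n → ℝ, (∀ k, ε k = 1 ∨ ε k = -1) →
        ∑ k, ∑ l, A k l * (ε k * ε l) = 0 := by
      intro ε hε
      have hmem : |∑ k, ∑ l, A k l * (ε k * ε l)| ∈ S := by
        refine ⟨fun k => ε k • e, fun k => ?_, ?_⟩
        · rw [norm_smul, hne, Real.norm_eq_abs]
          rcases hε k with h1 | h1 <;> simp [h1]
        · congr 1
          refine Finset.sum_congr rfl fun k _ => Finset.sum_congr rfl fun l _ => ?_
          rw [real_inner_smul_left, real_inner_smul_right, hee]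
          ring
      have hle := le_csSup hbdd hmem
      rw [← hgam, h] at hle
      have hge := abs_nonneg (∑ k, ∑ l, A k l * (ε k * ε l))
      exact abs_eq_zero.mp (le_antisymm hle hge)
    -- quadratic evaluations at sign vectors
    have E : ∀ (i j : Fin n), i ≠ j → ∀ a b : ℝ, (a = 0 ∨ a = -2) → (b = 0 ∨ b = -2) →
        (∑ k, ∑ l, A k l) + a * (∑ l, A i l) + b * (∑ l, A j l)
          + a * (∑ k, A k i) + b * (∑ k, A k j)
          + a^2 * A i i + b^2 * A j j + a*b*(A i j + A j i) = 0 := by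
      intro i j hij a b ha hb
      rw [← quad_expand A i j hij a b]
      refine hzero _ fun k => ?_
      have hji : j ≠ i := hij.symm
      by_cases h1 : k = i <;> by_cases h2 : k = j <;>
        rcases ha with ha | ha <;> rcases hb with hb | hb <;>
          simp [h1, h2, hij, hji, ha, hb] <;> norm_num
    have hoff : ∀ i j, i ≠ j → A i j = 0 := by
      intro i j hij
      have e00 := E i j hij 0 0 (Or.inl rfl) (Or.inl rfl)
      have e10 := E i j hij (-2) 0 (Or.inr rfl) (Or.inl rfl)
      have e01 := E i j hij 0 (-2) (Or.inl rfl) (Or.inr rfl)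
      have e11 := E i j hij (-2) (-2) (Or.inr rfl) (Or.inr rfl)
      have hsym : A j i = A i j := hA.apply i j
      nlinarith [e00, e10, e01, e11]
    refine ⟨hoff, ?_⟩
    -- trace from the all-ones vector
    rcases Fin.pos_iff_nonempty.mp (Nat.lt_of_lt_of_le Nat.zero_lt_one hd) with ⟨⟩
    by_cases hn : n = 0
    · subst hn
      simp [htrace]
    · have hsum0 : ∑ k, ∑ l, A k l = 0 := by
        have := hzero (fun _ => 1) (fun _ => Or.inl rfl)
        simpa using this
      have hdiag : ∑ k, ∑ l, A k l = ∑ k, A k k := by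
        refine Finset.sum_congr rfl fun k _ => ?_
        exact Finset.sum_eq_single k (fun l _ hl => hoff k l (Ne.symm hl)) (by simp)
      rw [htrace, ← hdiag, hsum0]
  · rintro ⟨hdiag, htr⟩
    have hval : ∀ x : Fin n → EuclideanSpace ℝ (Fin d), (∀ i, ‖x i‖ = 1) →
        ∑ i, ∑ j, A i j * (inner ℝ (x i) (x j) : ℝ) = 0 := by
      intro x hx
      have : ∀ i, ∑ j, A i j * (inner ℝ (x i) (x j) : ℝ) = A i i := by
        intro i
        rw [Finset.sum_eq_single i (fun j _ hj => by rw [hdiag i j (Ne.symm hj), zero_mul])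
            (fun h => absurd (Finset.mem_univ i) h),
          real_inner_self_eq_norm_sq, hx i]
        norm_num
      simp only [this]
      rw [← htrace] at *
      exact htr
    have hSeq : S = {0} := by
      ext r
      constructor
      · rintro ⟨x, hx, rfl⟩
        simp only [Set.mem_singleton_iff]
        rw [hval x hx, abs_zero]
      · rintro rfl
        exact ⟨fun _ => e, fun _ => hne, by rw [hval (fun _ => e) (fun _ => hne), abs_zero]⟩
    rw [hgam, hSeq, csSup_singleton]
end

section
/- For every real symmetric matrix A ∈ S^n and every d ∈ ℕ: ‖A‖_{Γ,d} = max { ‖D A D‖_{γ,d} : D = diag(δ_1,...,δ_n), δ_i ∈ [0,1] }. -/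
lemma absSum_le {n d : ℕ} (B : Matrix (Fin n) (Fin n) ℝ)
    (x : Fin n → EuclideanSpace ℝ (Fin d)) (hx : ∀ i, ‖x i‖ ≤ 1) :
    |∑ i, ∑ j, B i j * (inner ℝ (x i) (x j) : ℝ)| ≤ ∑ i, ∑ j, |B i j| := by
  refine (Finset.abs_sum_le_sum_abs _ _).trans (Finset.sum_le_sum fun i _ => ?_)
  refine (Finset.abs_sum_le_sum_abs _ _).trans (Finset.sum_le_sum fun j _ => ?_)
  rw [abs_mul]
  have h1 : |(inner ℝ (x i) (x j) : ℝ)| ≤ ‖x i‖ * ‖x j‖ := abs_real_inner_le_norm _ _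
  have h2 : ‖x i‖ * ‖x j‖ ≤ 1 := by
    nlinarith [norm_nonneg (x i), norm_nonneg (x j), hx i, hx j]
  nlinarith [abs_nonneg (B i j), abs_nonneg ((inner ℝ (x i) (x j) : ℝ))]

/-- ‖A‖_{Γ,d} = max over diagonal contractions of ‖DAD‖_{γ,d}. -/
theorem GammaNorm_eq_sup_gammaSemi_diag (n d : ℕ) (hd : 1 ≤ d)
    (A : Matrix (Fin n) (Fin n) ℝ) (hA : A.IsSymm) :
    GammaNorm d A = sSup { r | ∃ δ : Fin n → ℝ, (∀ i, δ i ∈ Set.Icc (0:ℝ) 1) ∧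
      r = gammaSemi d (Matrix.diagonal δ * A * Matrix.diagonal δ) } := by
  classical
  obtain ⟨e, he⟩ : ∃ e : EuclideanSpace ℝ (Fin d), ‖e‖ = 1 :=
    ⟨EuclideanSpace.single ⟨0, hd⟩ 1, by simp⟩
  set C : ℝ := ∑ i, ∑ j, |A i j| with hC
  have hC0 : 0 ≤ C := by positivity
  have entry : ∀ (δ : Fin n → ℝ) (i j : Fin n),
      (Matrix.diagonal δ * A * Matrix.diagonal δ) i j = δ i * A i j * δ j := by
    intro δ i j
    simp [Matrix.mul_diagonal, Matrix.diagonal_mul]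
  -- bound on each gammaSemi set
  have semiBdd : ∀ (δ : Fin n → ℝ), (∀ i, δ i ∈ Set.Icc (0:ℝ) 1) →
      ∀ r ∈ { r | ∃ x : Fin n → EuclideanSpace ℝ (Fin d), (∀ i, ‖x i‖ = 1) ∧
        r = |∑ i, ∑ j, (Matrix.diagonal δ * A * Matrix.diagonal δ) i j * (inner ℝ (x i) (x j) : ℝ)| },
      r ≤ C := by
    rintro δ hδ r ⟨y, hy, rfl⟩
    refine (absSum_le _ y fun i => (hy i).le).trans ?_
    refine Finset.sum_le_sum fun i _ => Finset.sum_le_sum fun j _ => ?_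
    rw [entry]
    have h1 := (hδ i).1; have h2 := (hδ i).2
    have h3 := (hδ j).1; have h4 := (hδ j).2
    rw [abs_mul, abs_mul, abs_of_nonneg h1, abs_of_nonneg h3]
    nlinarith [mul_nonneg (mul_nonneg (sub_nonneg.mpr h2) (abs_nonneg (A i j))) h3,
      mul_nonneg (abs_nonneg (A i j)) (sub_nonneg.mpr h4)]
  have gBound : ∀ (δ : Fin n → ℝ), (∀ i, δ i ∈ Set.Icc (0:ℝ) 1) →
      gammaSemi d (Matrix.diagonal δ * A * Matrix.diagonal δ) ≤ C := by
    intro δ hδ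
    exact Real.sSup_le (semiBdd δ hδ) hC0
  have RHSbdd : BddAbove { r | ∃ δ : Fin n → ℝ, (∀ i, δ i ∈ Set.Icc (0:ℝ) 1) ∧
      r = gammaSemi d (Matrix.diagonal δ * A * Matrix.diagonal δ) } := by
    refine ⟨C, ?_⟩
    rintro r ⟨δ, hδ, rfl⟩
    exact gBound δ hδ
  have LHSbdd : BddAbove { r | ∃ x : Fin n → EuclideanSpace ℝ (Fin d), (∀ i, ‖x i‖ ≤ 1) ∧
      r = |∑ i, ∑ j, A i j * (inner ℝ (x i) (x j) : ℝ)| } := by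
    refine ⟨C, ?_⟩
    rintro r ⟨x, hx, rfl⟩
    exact absSum_le A x hx
  have hGamma0 : 0 ≤ GammaNorm d A := by
    refine le_csSup LHSbdd ⟨fun _ => 0, fun i => by simp, by simp⟩
  -- 0 ≤ RHS
  have hRHS0 : 0 ≤ sSup { r | ∃ δ : Fin n → ℝ, (∀ i, δ i ∈ Set.Icc (0:ℝ) 1) ∧
      r = gammaSemi d (Matrix.diagonal δ * A * Matrix.diagonal δ) } := by
    have h0mem : ∀ (δ : Fin n → ℝ), (∀ i, δ i ∈ Set.Icc (0:ℝ) 1) →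
        0 ≤ gammaSemi d (Matrix.diagonal δ * A * Matrix.diagonal δ) := by
      intro δ hδ
      have : |∑ i, ∑ j, (Matrix.diagonal δ * A * Matrix.diagonal δ) i j *
          (inner ℝ ((fun _ => e) i) ((fun _ => e) j) : ℝ)| ∈
          { r | ∃ x : Fin n → EuclideanSpace ℝ (Fin d), (∀ i, ‖x i‖ = 1) ∧
            r = |∑ i, ∑ j, (Matrix.diagonal δ * A * Matrix.diagonal δ) i j * (inner ℝ (x i) (x j) : ℝ)| } :=
        ⟨fun _ => e, fun _ => he, rfl⟩
      calc (0:ℝ) ≤ _ := abs_nonneg _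
        _ ≤ gammaSemi d (Matrix.diagonal δ * A * Matrix.diagonal δ) :=
          le_csSup ⟨C, semiBdd δ hδ⟩ this
    have hmem : gammaSemi d (Matrix.diagonal (fun _ => (0:ℝ)) * A * Matrix.diagonal (fun _ => (0:ℝ))) ∈
        { r | ∃ δ : Fin n → ℝ, (∀ i, δ i ∈ Set.Icc (0:ℝ) 1) ∧
          r = gammaSemi d (Matrix.diagonal δ * A * Matrix.diagonal δ) } :=
      ⟨fun _ => 0, fun _ => ⟨le_refl _, zero_le_one⟩, rfl⟩
    exact le_trans (h0mem _ fun _ => ⟨le_refl _, zero_le_one⟩) (le_csSup RHSbdd hmem)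
  apply le_antisymm
  · -- GammaNorm ≤ RHS
    refine Real.sSup_le ?_ hRHS0
    rintro r ⟨x, hx, rfl⟩
    set δ : Fin n → ℝ := fun i => ‖x i‖ with hδdef
    set y : Fin n → EuclideanSpace ℝ (Fin d) :=
      fun i => if h : x i = 0 then e else ‖x i‖⁻¹ • x i with hydef
    have hy : ∀ i, ‖y i‖ = 1 := by
      intro i
      by_cases h : x i = 0
      · simp [hydef, h, he]
      · simp only [hydef, dif_neg h]
        exact norm_smul_inv_norm h
    have hxy : ∀ i, x i = δ i • y i := by
      intro i
      by_cases h : x i = 0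
      · simp [hydef, hδdef, h]
      · simp only [hydef, hδdef, dif_neg h, smul_smul]
        rw [mul_inv_cancel₀ (norm_ne_zero_iff.mpr h), one_smul]
    have hsum : ∑ i, ∑ j, A i j * (inner ℝ (x i) (x j) : ℝ) =
        ∑ i, ∑ j, (Matrix.diagonal δ * A * Matrix.diagonal δ) i j * (inner ℝ (y i) (y j) : ℝ) := by
      refine Finset.sum_congr rfl fun i _ => Finset.sum_congr rfl fun j _ => ?_
      rw [entry, hxy i, hxy j, real_inner_smul_left, real_inner_smul_right]
      ring
    have hmem1 : |∑ i, ∑ j, A i j * (inner ℝ (x i) (x j) : ℝ)| ∈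
        { r | ∃ z : Fin n → EuclideanSpace ℝ (Fin d), (∀ i, ‖z i‖ = 1) ∧
          r = |∑ i, ∑ j, (Matrix.diagonal δ * A * Matrix.diagonal δ) i j * (inner ℝ (z i) (z j) : ℝ)| } :=
      ⟨y, hy, by rw [hsum]⟩
    have hδIcc : ∀ i, δ i ∈ Set.Icc (0:ℝ) 1 := fun i => ⟨norm_nonneg _, hx i⟩
    calc |∑ i, ∑ j, A i j * (inner ℝ (x i) (x j) : ℝ)|
        ≤ gammaSemi d (Matrix.diagonal δ * A * Matrix.diagonal δ) :=
          le_csSup ⟨C, semiBdd δ hδIcc⟩ hmem1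
      _ ≤ _ := le_csSup RHSbdd ⟨δ, hδIcc, rfl⟩
  · -- RHS ≤ GammaNorm
    refine Real.sSup_le ?_ hGamma0
    rintro r ⟨δ, hδ, rfl⟩
    refine Real.sSup_le ?_ hGamma0
    rintro r ⟨y, hy, rfl⟩
    set x : Fin n → EuclideanSpace ℝ (Fin d) := fun i => δ i • y i with hxdef
    have hx : ∀ i, ‖x i‖ ≤ 1 := by
      intro i
      rw [hxdef]
      simp only [norm_smul, hy i, mul_one, Real.norm_eq_abs, abs_of_nonneg (hδ i).1]
      exact (hδ i).2
    have hsum : ∑ i, ∑ j, (Matrix.diagonal δ * A * Matrix.diagonal δ) i j * (inner ℝ (y i) (y j) : ℝ) =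
        ∑ i, ∑ j, A i j * (inner ℝ (x i) (x j) : ℝ) := by
      refine Finset.sum_congr rfl fun i _ => Finset.sum_congr rfl fun j _ => ?_
      rw [entry, hxdef]
      simp only [real_inner_smul_left, real_inner_smul_right]
      ring
    exact le_csSup LHSbdd ⟨x, hx, by rw [hsum]⟩
end

section
/- If A ∈ S^n is a real symmetric matrix with all diagonal entries equal to zero, then ‖A‖_{γ,d} = ‖A‖_{Γ,d} for every d ∈ ℕ. -/
open Finset

variable {n d : ℕ}

noncomputable def Sval (A : Matrix (Fin n) (Fin n) ℝ) (x : Fin n → EuclideanSpace ℝ (Fin d)) : ℝ :=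
  ∑ i, ∑ j, A i j * (inner ℝ (x i) (x j) : ℝ)

lemma expand_key (A : Matrix (Fin n) (Fin n) ℝ) (k : Fin n) (hk : A k k = 0)
    (y : Fin n → EuclideanSpace ℝ (Fin d)) :
    Sval A y = (inner ℝ (y k) (∑ j ∈ univ.erase k, (A k j + A j k) • y j) : ℝ)
      + ∑ i ∈ univ.erase k, ∑ j ∈ univ.erase k, A i j * (inner ℝ (y i) (y j) : ℝ) := by
  have hsplit : ∀ (f : Fin n → ℝ), ∑ i, f i = ∑ i ∈ univ.erase k, f i + f k :=
    fun f => (Finset.sum_erase_add _ _ (Finset.mem_univ k)).symm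
  simp_rw [Sval, hsplit, inner_sum, real_inner_smul_right, hk]
  rw [Finset.sum_add_distrib]
  have : ∀ i ∈ univ.erase k, A i k * (inner ℝ (y i) (y k) : ℝ) = A i k * (inner ℝ (y k) (y i) : ℝ) :=
    fun i _ => by rw [real_inner_comm]
  rw [Finset.sum_congr rfl this]
  ring_nf
  rw [Finset.sum_add_distrib]
  ring

lemma step_lemma (hd : 1 ≤ d) (A : Matrix (Fin n) (Fin n) ℝ) (hdiag : ∀ i, A i i = 0)
    (x : Fin n → EuclideanSpace ℝ (Fin d)) (hx : ∀ i, ‖x i‖ ≤ 1) (k : Fin n) :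
    ∃ w : EuclideanSpace ℝ (Fin d), ‖w‖ = 1 ∧
      |Sval A x| ≤ |Sval A (Function.update x k w)| := by
  set v : EuclideanSpace ℝ (Fin d) := ∑ j ∈ univ.erase k, (A k j + A j k) • x j with hv
  set C : ℝ := ∑ i ∈ univ.erase k, ∑ j ∈ univ.erase k, A i j * (inner ℝ (x i) (x j) : ℝ) with hC
  have hupd : ∀ w : EuclideanSpace ℝ (Fin d),
      Sval A (Function.update x k w) = (inner ℝ w v : ℝ) + C := by
    intro w
    rw [expand_key A k (hdiag k)]
    congr 1
    · congr 1
      · simp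
      · rw [hv]
        exact Finset.sum_congr rfl fun j hj => by
          rw [Function.update_of_ne (Finset.ne_of_mem_erase hj)]
    · exact Finset.sum_congr rfl fun i hi => Finset.sum_congr rfl fun j hj => by
        rw [Function.update_of_ne (Finset.ne_of_mem_erase hi),
          Function.update_of_ne (Finset.ne_of_mem_erase hj)]
  have hSx : Sval A x = (inner ℝ (x k) v : ℝ) + C := by
    rw [← hupd (x k), Function.update_eq_self]
  have hSxle : |Sval A x| ≤ ‖v‖ + |C| := by
    rw [hSx]
    refine (abs_add_le _ _).trans (add_le_add_left ?_ _)
    calc |(inner ℝ (x k) v : ℝ)| ≤ ‖x k‖ * ‖v‖ := abs_real_inner_le_norm _ _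
      _ ≤ 1 * ‖v‖ := by gcongr; exact hx k
      _ = ‖v‖ := one_mul _
  by_cases hv0 : v = 0
  · refine ⟨EuclideanSpace.single ⟨0, hd⟩ 1, by simp, ?_⟩
    rw [hupd, hSx, hv0]
    simp
  · set s : ℝ := if 0 ≤ C then 1 else -1 with hs
    refine ⟨(s * ‖v‖⁻¹) • v, ?_, ?_⟩
    · rw [norm_smul]
      have : |s| = 1 := by rw [hs]; split <;> simp
      simp [abs_mul, this, abs_of_nonneg (inv_nonneg.2 (norm_nonneg v)),
        inv_mul_cancel₀ (norm_ne_zero_iff.2 hv0)]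
    · rw [hupd, real_inner_smul_left, real_inner_self_eq_norm_sq]
      have hvpos : (0:ℝ) < ‖v‖ := norm_pos_iff.2 hv0
      have heq : s * ‖v‖⁻¹ * ‖v‖ ^ 2 = s * ‖v‖ := by
        field_simp
      rw [heq]
      refine hSxle.trans (le_of_eq ?_)
      rw [hs]
      split <;> rename_i h
      · rw [abs_of_nonneg h, one_mul,
          abs_of_nonneg (show (0:ℝ) ≤ ‖v‖ + C by positivity)]
      · have hC0 : C < 0 := not_le.1 h
        rw [abs_of_neg hC0, neg_one_mul,
          abs_of_nonpos (show -‖v‖ + C ≤ 0 by nlinarith)]; ring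

lemma exists_unit_config (hd : 1 ≤ d) (A : Matrix (Fin n) (Fin n) ℝ)
    (hdiag : ∀ i, A i i = 0) (x : Fin n → EuclideanSpace ℝ (Fin d))
    (hx : ∀ i, ‖x i‖ ≤ 1) :
    ∃ y : Fin n → EuclideanSpace ℝ (Fin d), (∀ i, ‖y i‖ = 1) ∧ |Sval A x| ≤ |Sval A y| := by
  have key : ∀ s : Finset (Fin n), ∃ y : Fin n → EuclideanSpace ℝ (Fin d),
      (∀ i ∈ s, ‖y i‖ = 1) ∧ (∀ i, ‖y i‖ ≤ 1) ∧ |Sval A x| ≤ |Sval A y| := by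
    intro s
    induction s using Finset.induction_on with
    | empty => exact ⟨x, fun i hi => absurd hi (Finset.notMem_empty i), hx, le_refl _⟩
    | insert a s' ha ih =>
      obtain ⟨y, hy1, hy2, hy3⟩ := ih
      obtain ⟨w, hw1, hw2⟩ := step_lemma hd A hdiag y hy2 a
      refine ⟨Function.update y a w, ?_, ?_, hy3.trans hw2⟩
      · intro i hi
        rcases Finset.mem_insert.1 hi with h | h
        · rw [h, Function.update_self]; exact hw1
        · rw [Function.update_of_ne (show i ≠ a from fun he => ha (he ▸ h))]
          exact hy1 i h
      · intro i
        rcases eq_or_ne i a with h | h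
        · rw [h, Function.update_self]; exact hw1.le
        · rw [Function.update_of_ne h]; exact hy2 i
  obtain ⟨y, hy1, _, hy3⟩ := key Finset.univ
  exact ⟨y, fun i => hy1 i (Finset.mem_univ i), hy3⟩

lemma sval_bound (A : Matrix (Fin n) (Fin n) ℝ) (x : Fin n → EuclideanSpace ℝ (Fin d))
    (hx : ∀ i, ‖x i‖ ≤ 1) : |Sval A x| ≤ ∑ i, ∑ j, |A i j| := by
  refine (Finset.abs_sum_le_sum_abs _ _).trans (Finset.sum_le_sum fun i _ => ?_)
  refine (Finset.abs_sum_le_sum_abs _ _).trans (Finset.sum_le_sum fun j _ => ?_)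
  rw [abs_mul]
  calc |A i j| * |(inner ℝ (x i) (x j) : ℝ)|
      ≤ |A i j| * (‖x i‖ * ‖x j‖) := by
        exact mul_le_mul_of_nonneg_left (abs_real_inner_le_norm _ _) (abs_nonneg _)
    _ ≤ |A i j| * (1 * 1) := by
        refine mul_le_mul_of_nonneg_left ?_ (abs_nonneg _)
        exact mul_le_mul (hx i) (hx j) (norm_nonneg _) zero_le_one
    _ = |A i j| := by ring

/-- If A is symmetric with zero diagonal, then ‖A‖_{γ,d} = ‖A‖_{Γ,d}. -/
theorem gammaSemi_eq_GammaNorm_of_diag_zero (n d : ℕ) (hd : 1 ≤ d)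
    (A : Matrix (Fin n) (Fin n) ℝ) (hA : A.IsSymm) (hdiag : ∀ i, A i i = 0) :
    gammaSemi d A = GammaNorm d A := by
  set γS := { r | ∃ x : Fin n → EuclideanSpace ℝ (Fin d), (∀ i, ‖x i‖ = 1) ∧
    r = |∑ i, ∑ j, A i j * (inner ℝ (x i) (x j) : ℝ)| } with hγS
  set ΓS := { r | ∃ x : Fin n → EuclideanSpace ℝ (Fin d), (∀ i, ‖x i‖ ≤ 1) ∧
    r = |∑ i, ∑ j, A i j * (inner ℝ (x i) (x j) : ℝ)| } with hΓS
  have e0 : EuclideanSpace ℝ (Fin d) := EuclideanSpace.single ⟨0, hd⟩ 1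
  have hne_γ : γS.Nonempty := by
    refine ⟨_, fun _ => EuclideanSpace.single ⟨0, hd⟩ 1, fun i => ?_, rfl⟩
    simp [EuclideanSpace.norm_single]
  have hbddΓ : BddAbove ΓS := by
    refine ⟨∑ i, ∑ j, |A i j|, fun r hr => ?_⟩
    obtain ⟨x, hx, rfl⟩ := hr
    exact sval_bound A x hx
  have hbddγ : BddAbove γS := by
    refine ⟨∑ i, ∑ j, |A i j|, fun r hr => ?_⟩
    obtain ⟨x, hx, rfl⟩ := hr
    exact sval_bound A x (fun i => (hx i).le)
  have hsub : γS ⊆ ΓS := by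
    rintro r ⟨x, hx, rfl⟩
    exact ⟨x, fun i => (hx i).le, rfl⟩
  refine le_antisymm (csSup_le_csSup hbddΓ hne_γ hsub) ?_
  refine csSup_le (hne_γ.mono hsub) ?_
  rintro r ⟨x, hx, rfl⟩
  obtain ⟨y, hy, hle⟩ := exists_unit_config hd A hdiag x hx
  exact hle.trans (le_csSup hbddγ ⟨y, hy, rfl⟩)
end

section
/- If A ∈ S^n is real positive semidefinite, then ‖A‖_{γ,d} = ‖A‖_{Γ,d} = ‖A‖_{G,d} for every d ∈ ℕ. -/
open Finset

section Aux

variable {n d : ℕ}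

private lemma bf_nonneg' (A : Matrix (Fin n) (Fin n) ℝ) (hA : A.PosSemidef)
    (x : Fin n → EuclideanSpace ℝ (Fin d)) :
    0 ≤ ∑ i, ∑ j, A i j * (inner ℝ (x i) (x j) : ℝ) := by
  have h : ∀ i j, (inner ℝ (x i) (x j) : ℝ) = ∑ k, x i k * x j k := by
    intro i j
    simp [PiLp.inner_apply, RCLike.inner_apply, mul_comm]
  calc (0:ℝ) ≤ ∑ k, ∑ i, ∑ j, A i j * (x i k * x j k) := by
        apply Finset.sum_nonneg
        intro k _
        have := hA.dotProduct_mulVec_nonneg (fun i => x i k)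
        simp only [dotProduct, Matrix.mulVec, dotProduct, star_trivial] at this
        calc (0:ℝ) ≤ ∑ i, (x i k) * ∑ j, A i j * x j k := this
          _ = ∑ i, ∑ j, A i j * (x i k * x j k) := by
            rw [Finset.sum_congr rfl]
            intro i _
            rw [Finset.mul_sum]
            apply Finset.sum_congr rfl
            intro j _
            ring
    _ = ∑ i, ∑ j, A i j * (inner ℝ (x i) (x j) : ℝ) := by
        rw [Finset.sum_comm]
        apply Finset.sum_congr rfl; intro i _
        rw [Finset.sum_comm]
        apply Finset.sum_congr rfl; intro j _
        rw [h, Finset.mul_sum]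

private lemma bf_symm' (A : Matrix (Fin n) (Fin n) ℝ) (hA : A.IsSymm)
    (x y : Fin n → EuclideanSpace ℝ (Fin d)) :
    ∑ i, ∑ j, A i j * (inner ℝ (x i) (y j) : ℝ)
      = ∑ i, ∑ j, A i j * (inner ℝ (y i) (x j) : ℝ) := by
  rw [Finset.sum_comm]
  apply Finset.sum_congr rfl; intro j _
  apply Finset.sum_congr rfl; intro i _
  rw [real_inner_comm, ← hA.apply i j]

private lemma bf_expand' (A : Matrix (Fin n) (Fin n) ℝ)
    (x y : Fin n → EuclideanSpace ℝ (Fin d)) (t : ℝ) :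
    ∑ i, ∑ j, A i j * (inner ℝ (x i + t • y i) (x j + t • y j) : ℝ)
      = (∑ i, ∑ j, A i j * (inner ℝ (y i) (y j) : ℝ)) * t^2
        + ((∑ i, ∑ j, A i j * (inner ℝ (x i) (y j) : ℝ))
            + (∑ i, ∑ j, A i j * (inner ℝ (y i) (x j) : ℝ))) * t
        + (∑ i, ∑ j, A i j * (inner ℝ (x i) (x j) : ℝ)) := by
  simp only [Finset.sum_mul, Finset.mul_sum, inner_add_left, inner_add_right,
    real_inner_smul_left, real_inner_smul_right, ← Finset.sum_add_distrib]
  apply Finset.sum_congr rfl; intro i _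
  apply Finset.sum_congr rfl; intro j _
  ring

private lemma bf_cauchy' (A : Matrix (Fin n) (Fin n) ℝ) (hA : A.PosSemidef)
    (x y : Fin n → EuclideanSpace ℝ (Fin d)) :
    (∑ i, ∑ j, A i j * (inner ℝ (x i) (y j) : ℝ))^2
      ≤ (∑ i, ∑ j, A i j * (inner ℝ (x i) (x j) : ℝ))
        * (∑ i, ∑ j, A i j * (inner ℝ (y i) (y j) : ℝ)) := by
  set a := ∑ i, ∑ j, A i j * (inner ℝ (y i) (y j) : ℝ) with ha
  set c := ∑ i, ∑ j, A i j * (inner ℝ (x i) (x j) : ℝ) with hc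
  set b := ∑ i, ∑ j, A i j * (inner ℝ (x i) (y j) : ℝ) with hb
  have hsym := bf_symm' A hA.1 x y
  have hq : ∀ t : ℝ, 0 ≤ a * (t * t) + (2*b) * t + c := by
    intro t
    have h0 := bf_nonneg' A hA (fun i => x i + t • y i)
    rw [bf_expand' A x y t, ← hsym] at h0
    nlinarith [h0]
  have hD := discrim_le_zero hq
  rw [discrim] at hD
  nlinarith

private lemma quad_gen' (c : Fin n → Fin n → ℝ) (u : Fin n → ℝ) (k : Fin n) :
    ∑ i, ∑ j, c i j * u i * u j
      = c k k * u k * u k + (∑ j ∈ univ.erase k, c k j * u j) * u k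
        + u k * (∑ i ∈ univ.erase k, c i k * u i)
        + ∑ i ∈ univ.erase k, ∑ j ∈ univ.erase k, c i j * u i * u j := by
  have hinner : ∀ i : Fin n, ∑ j, c i j * u i * u j
      = ∑ j ∈ univ.erase k, c i j * u i * u j + c i k * u i * u k :=
    fun i => (Finset.sum_erase_add _ _ (Finset.mem_univ k)).symm
  have e1 : ∑ j ∈ univ.erase k, c k j * u k * u j
      = (∑ j ∈ univ.erase k, c k j * u j) * u k := by
    rw [Finset.sum_mul]; exact Finset.sum_congr rfl fun j _ => by ring
  have e2 : ∑ i ∈ univ.erase k, c i k * u i * u k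
      = u k * (∑ i ∈ univ.erase k, c i k * u i) := by
    rw [Finset.mul_sum]; exact Finset.sum_congr rfl fun i _ => by ring
  rw [← Finset.sum_erase_add _ _ (Finset.mem_univ k)]
  simp only [hinner, Finset.sum_add_distrib]
  rw [e1, e2]
  ring

private lemma quad_key' (c : Fin n → Fin n → ℝ) (t : Fin n → ℝ) (k : Fin n) (v : ℝ) :
    ∑ i, ∑ j, c i j * Function.update t k v i * Function.update t k v j
      = c k k * v * v + (∑ j ∈ univ.erase k, c k j * t j) * v
        + v * (∑ i ∈ univ.erase k, c i k * t i)
        + ∑ i ∈ univ.erase k, ∑ j ∈ univ.erase k, c i j * t i * t j := by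
  rw [quad_gen' c _ k]
  have hu : ∀ i ∈ univ.erase k, Function.update t k v i = t i := fun i hi =>
    Function.update_of_ne (Finset.ne_of_mem_erase hi) _ _
  rw [Function.update_self]
  have e1 : ∑ j ∈ univ.erase k, c k j * Function.update t k v j
      = ∑ j ∈ univ.erase k, c k j * t j :=
    Finset.sum_congr rfl fun j hj => by rw [hu j hj]
  have e2 : ∑ i ∈ univ.erase k, c i k * Function.update t k v i
      = ∑ i ∈ univ.erase k, c i k * t i :=
    Finset.sum_congr rfl fun i hi => by rw [hu i hi]
  have e3 : ∑ i ∈ univ.erase k, ∑ j ∈ univ.erase k,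
        c i j * Function.update t k v i * Function.update t k v j
      = ∑ i ∈ univ.erase k, ∑ j ∈ univ.erase k, c i j * t i * t j :=
    Finset.sum_congr rfl fun i hi => Finset.sum_congr rfl fun j hj => by
      rw [hu i hi, hu j hj]
  rw [e1, e2, e3]

private lemma sign_step' (c : Fin n → Fin n → ℝ) (k : Fin n) (hk : 0 ≤ c k k)
    (t : Fin n → ℝ) (ht : |t k| ≤ 1) :
    ∃ v : ℝ, (v = 1 ∨ v = -1) ∧
      ∑ i, ∑ j, c i j * t i * t j
        ≤ ∑ i, ∑ j, c i j * Function.update t k v i * Function.update t k v j := by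
  have habs := abs_le.1 ht
  have hQ : ∑ i, ∑ j, c i j * t i * t j
      = ∑ i, ∑ j, c i j * Function.update t k (t k) i * Function.update t k (t k) j := by
    rw [Function.update_eq_self]
  have hw : t k * t k ≤ 1 := by nlinarith [habs.1, habs.2]
  rcases le_or_gt 0 ((∑ j ∈ univ.erase k, c k j * t j)
      + (∑ i ∈ univ.erase k, c i k * t i)) with h | h
  · refine ⟨1, Or.inl rfl, ?_⟩
    rw [hQ, quad_key', quad_key']
    nlinarith [habs.1, habs.2, mul_nonneg hk (sub_nonneg.2 hw)]
  · refine ⟨-1, Or.inr rfl, ?_⟩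
    rw [hQ, quad_key', quad_key']
    nlinarith [habs.1, habs.2, mul_nonneg hk (sub_nonneg.2 hw)]

private lemma signs_round' (c : Fin n → Fin n → ℝ) (hdiag : ∀ k, 0 ≤ c k k)
    (t : Fin n → ℝ) (ht : ∀ i, |t i| ≤ 1) :
    ∃ s : Fin n → ℝ, (∀ i, s i = 1 ∨ s i = -1) ∧
      ∑ i, ∑ j, c i j * t i * t j ≤ ∑ i, ∑ j, c i j * s i * s j := by
  suffices h : ∀ k : ℕ, k ≤ n → ∃ s : Fin n → ℝ,
      (∀ i : Fin n, (i : ℕ) < k → s i = 1 ∨ s i = -1) ∧ (∀ i, |s i| ≤ 1) ∧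
      ∑ i, ∑ j, c i j * t i * t j ≤ ∑ i, ∑ j, c i j * s i * s j by
    obtain ⟨s, h1, _, h3⟩ := h n le_rfl
    exact ⟨s, fun i => h1 i i.isLt, h3⟩
  intro k
  induction k with
  | zero => exact fun _ => ⟨t, fun i h => absurd h (Nat.not_lt_zero _), ht, le_rfl⟩
  | succ k ih =>
    intro hk
    obtain ⟨s, h1, h2, h3⟩ := ih (Nat.le_of_succ_le hk)
    have hkn : k < n := hk
    set kk : Fin n := ⟨k, hkn⟩ with hkk
    obtain ⟨v, hv, hle⟩ := sign_step' c kk (hdiag kk) s (h2 kk)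
    refine ⟨Function.update s kk v, ?_, ?_, le_trans h3 hle⟩
    · intro i hi
      rcases eq_or_ne i kk with rfl | hne
      · rw [Function.update_self]; exact hv
      · rw [Function.update_of_ne hne]
        have hik : (i : ℕ) ≠ k := fun h => hne (Fin.ext h)
        exact h1 i (by omega)
    · intro i
      rcases eq_or_ne i kk with rfl | hne
      · rw [Function.update_self]; rcases hv with rfl | rfl <;> norm_num
      · rw [Function.update_of_ne hne]; exact h2 i

private lemma bf_smul' (A : Matrix (Fin n) (Fin n) ℝ) (s : Fin n → ℝ)
    (u : Fin n → EuclideanSpace ℝ (Fin d)) :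
    ∑ i, ∑ j, A i j * (inner ℝ (s i • u i) (s j • u j) : ℝ)
      = ∑ i, ∑ j, (A i j * (inner ℝ (u i) (u j) : ℝ)) * s i * s j := by
  apply Finset.sum_congr rfl; intro i _
  apply Finset.sum_congr rfl; intro j _
  rw [real_inner_smul_left, real_inner_smul_right]
  ring

end Aux

/-- For positive semidefinite A, all three Grothendieck d-norms coincide. -/
theorem gammaSemi_eq_GammaNorm_eq_GNorm_of_posSemidef (n d : ℕ) (hd : 1 ≤ d)
    (A : Matrix (Fin n) (Fin n) ℝ) (hA : A.PosSemidef) :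
    gammaSemi d A = GammaNorm d A ∧ GammaNorm d A = GNorm d A := by
  classical
  set Sγ := { r | ∃ x : Fin n → EuclideanSpace ℝ (Fin d), (∀ i, ‖x i‖ = 1) ∧
    r = |∑ i, ∑ j, A i j * (inner ℝ (x i) (x j) : ℝ)| } with hSγ
  set SΓ := { r | ∃ x : Fin n → EuclideanSpace ℝ (Fin d), (∀ i, ‖x i‖ ≤ 1) ∧
    r = |∑ i, ∑ j, A i j * (inner ℝ (x i) (x j) : ℝ)| } with hSΓ
  set SG := { r | ∃ (x : Fin n → EuclideanSpace ℝ (Fin d))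
      (y : Fin n → EuclideanSpace ℝ (Fin d)),
    (∀ i, ‖x i‖ ≤ 1) ∧ (∀ j, ‖y j‖ ≤ 1) ∧
    r = |∑ i, ∑ j, A i j * (inner ℝ (x i) (y j) : ℝ)| } with hSG
  -- subsets
  have hγΓ : Sγ ⊆ SΓ := by
    rintro r ⟨x, hx, rfl⟩
    exact ⟨x, fun i => le_of_eq (hx i), rfl⟩
  have hΓG : SΓ ⊆ SG := by
    rintro r ⟨x, hx, rfl⟩
    exact ⟨x, x, hx, hx, rfl⟩
  -- bound
  have hbG : ∀ r ∈ SG, r ≤ ∑ i, ∑ j, |A i j| := by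
    rintro r ⟨x, y, hx, hy, rfl⟩
    calc |∑ i, ∑ j, A i j * (inner ℝ (x i) (y j) : ℝ)|
        ≤ ∑ i, |∑ j, A i j * (inner ℝ (x i) (y j) : ℝ)| := Finset.abs_sum_le_sum_abs _ _
      _ ≤ ∑ i, ∑ j, |A i j * (inner ℝ (x i) (y j) : ℝ)| := by
          apply Finset.sum_le_sum
          intro i _
          exact Finset.abs_sum_le_sum_abs _ _
      _ ≤ ∑ i, ∑ j, |A i j| := by
          apply Finset.sum_le_sum; intro i _
          apply Finset.sum_le_sum; intro j _
          rw [abs_mul]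
          have h1 : |(inner ℝ (x i) (y j) : ℝ)| ≤ 1 := by
            calc |(inner ℝ (x i) (y j) : ℝ)| ≤ ‖x i‖ * ‖y j‖ := abs_real_inner_le_norm _ _
              _ ≤ 1 := by nlinarith [norm_nonneg (x i), norm_nonneg (y j), hx i, hy j]
          nlinarith [abs_nonneg (A i j)]
  have bddG : BddAbove SG := ⟨∑ i, ∑ j, |A i j|, fun r hr => hbG r hr⟩
  have bddΓ : BddAbove SΓ := bddG.mono hΓG
  have bddγ : BddAbove Sγ := bddΓ.mono hγΓ
  -- nonempty
  have neγ : Sγ.Nonempty := by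
    refine ⟨_, fun _ => EuclideanSpace.single (⟨0, hd⟩ : Fin d) (1 : ℝ), fun i => ?_, rfl⟩
    rw [EuclideanSpace.norm_single]; norm_num
  have neΓ : SΓ.Nonempty := neγ.mono hγΓ
  have neG : SG.Nonempty := neΓ.mono hΓG
  -- Γ ≤ γ (key step)
  have hΓγ : sSup SΓ ≤ sSup Sγ := by
    apply csSup_le neΓ
    rintro r ⟨x, hx, rfl⟩
    set e0 : EuclideanSpace ℝ (Fin d) := EuclideanSpace.single (⟨0, hd⟩ : Fin d) (1 : ℝ)
      with he0
    have he0n : ‖e0‖ = 1 := by rw [he0, EuclideanSpace.norm_single]; norm_num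
    set u : Fin n → EuclideanSpace ℝ (Fin d) :=
      fun i => if h : x i = 0 then e0 else ‖x i‖⁻¹ • x i with hu_def
    have hu : ∀ i, ‖u i‖ = 1 := by
      intro i
      rw [hu_def]
      by_cases h : x i = 0
      · simp [h, he0n]
      · simp only [h, dif_neg, not_false_iff]
        rw [norm_smul, norm_inv, norm_norm, inv_mul_cancel₀ (norm_ne_zero_iff.2 h)]
    have hx_eq : ∀ i, x i = ‖x i‖ • u i := by
      intro i
      rw [hu_def]
      by_cases h : x i = 0
      · simp [h]
      · simp only [h, dif_neg, not_false_iff, smul_smul,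
          mul_inv_cancel₀ (norm_ne_zero_iff.2 h), one_smul]
    set c : Fin n → Fin n → ℝ := fun i j => A i j * (inner ℝ (u i) (u j) : ℝ) with hc
    have hdiag : ∀ k, 0 ≤ c k k := by
      intro k
      have hA' : 0 ≤ A k k := by
        have := hA.dotProduct_mulVec_nonneg (Pi.single k 1)
        simpa [dotProduct, Matrix.mulVec, Pi.single_apply] using this
      have : (inner ℝ (u k) (u k) : ℝ) = 1 := by
        rw [real_inner_self_eq_norm_mul_norm, hu k]; norm_num
      rw [hc]; simp only [this, mul_one]; exact hA'
    set t : Fin n → ℝ := fun i => ‖x i‖ with htdef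
    have ht : ∀ i, |t i| ≤ 1 := by
      intro i; rw [htdef]; simpa [abs_of_nonneg (norm_nonneg (x i))] using hx i
    obtain ⟨s, hs, hle⟩ := signs_round' c hdiag t ht
    have hxt : ∑ i, ∑ j, A i j * (inner ℝ (x i) (x j) : ℝ)
        = ∑ i, ∑ j, c i j * t i * t j := by
      calc ∑ i, ∑ j, A i j * (inner ℝ (x i) (x j) : ℝ)
          = ∑ i, ∑ j, A i j * (inner ℝ (t i • u i) (t j • u j) : ℝ) := by
            apply Finset.sum_congr rfl; intro i _
            apply Finset.sum_congr rfl; intro j _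
            rw [← hx_eq i, ← hx_eq j]
        _ = ∑ i, ∑ j, c i j * t i * t j := bf_smul' A t u
    have hys : ∑ i, ∑ j, A i j * (inner ℝ (s i • u i) (s j • u j) : ℝ)
        = ∑ i, ∑ j, c i j * s i * s j := bf_smul' A s u
    have hxx0 : 0 ≤ ∑ i, ∑ j, A i j * (inner ℝ (x i) (x j) : ℝ) := bf_nonneg' A hA x
    have hyy0 : 0 ≤ ∑ i, ∑ j, A i j * (inner ℝ (s i • u i) (s j • u j) : ℝ) :=
      bf_nonneg' A hA _
    have hmem : |∑ i, ∑ j, A i j * (inner ℝ (s i • u i) (s j • u j) : ℝ)| ∈ Sγ := by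
      refine ⟨fun i => s i • u i, fun i => ?_, rfl⟩
      rw [norm_smul, hu i]
      rcases hs i with h | h <;> rw [h] <;> norm_num
    calc |∑ i, ∑ j, A i j * (inner ℝ (x i) (x j) : ℝ)|
        = ∑ i, ∑ j, A i j * (inner ℝ (x i) (x j) : ℝ) := abs_of_nonneg hxx0
      _ ≤ ∑ i, ∑ j, A i j * (inner ℝ (s i • u i) (s j • u j) : ℝ) := by
          rw [hxt, hys]; exact hle
      _ = |∑ i, ∑ j, A i j * (inner ℝ (s i • u i) (s j • u j) : ℝ)| := (abs_of_nonneg hyy0).symm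
      _ ≤ sSup Sγ := le_csSup bddγ hmem
  -- G ≤ Γ
  have hGΓ : sSup SG ≤ sSup SΓ := by
    apply csSup_le neG
    rintro r ⟨x, y, hx, hy, rfl⟩
    have hxx0 : 0 ≤ ∑ i, ∑ j, A i j * (inner ℝ (x i) (x j) : ℝ) := bf_nonneg' A hA x
    have hyy0 : 0 ≤ ∑ i, ∑ j, A i j * (inner ℝ (y i) (y j) : ℝ) := bf_nonneg' A hA y
    have hmx : |∑ i, ∑ j, A i j * (inner ℝ (x i) (x j) : ℝ)| ∈ SΓ := ⟨x, hx, rfl⟩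
    have hmy : |∑ i, ∑ j, A i j * (inner ℝ (y i) (y j) : ℝ)| ∈ SΓ := ⟨y, hy, rfl⟩
    have hax : ∑ i, ∑ j, A i j * (inner ℝ (x i) (x j) : ℝ) ≤ sSup SΓ :=
      (abs_of_nonneg hxx0) ▸ le_csSup bddΓ hmx
    have hay : ∑ i, ∑ j, A i j * (inner ℝ (y i) (y j) : ℝ) ≤ sSup SΓ :=
      (abs_of_nonneg hyy0) ▸ le_csSup bddΓ hmy
    have hM0 : 0 ≤ sSup SΓ := le_trans hxx0 hax
    have hcs := bf_cauchy' A hA x y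
    have hr2 : |∑ i, ∑ j, A i j * (inner ℝ (x i) (y j) : ℝ)|^2
        ≤ sSup SΓ * sSup SΓ := by
      rw [sq_abs]
      calc (∑ i, ∑ j, A i j * (inner ℝ (x i) (y j) : ℝ))^2
          ≤ (∑ i, ∑ j, A i j * (inner ℝ (x i) (x j) : ℝ))
            * (∑ i, ∑ j, A i j * (inner ℝ (y i) (y j) : ℝ)) := hcs
        _ ≤ sSup SΓ * sSup SΓ := mul_le_mul hax hay hyy0 hM0
    nlinarith [abs_nonneg (∑ i, ∑ j, A i j * (inner ℝ (x i) (y j) : ℝ)), hr2, hM0]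
  have e1 : gammaSemi d A = sSup Sγ := rfl
  have e2 : GammaNorm d A = sSup SΓ := rfl
  have e3 : GNorm d A = sSup SG := rfl
  constructor
  · rw [e1, e2]
    exact le_antisymm (csSup_le_csSup bddΓ neγ hγΓ) hΓγ
  · rw [e2, e3]
    exact le_antisymm (csSup_le_csSup bddG neΓ hΓG) hGΓ
end

section
/- Let A ∈ S^n be real positive semidefinite and B ∈ S^n satisfy −A ⪯ B ⪯ A (in the Loewner order). Then for every d ∈ ℕ, ‖B‖_{G,d} ≤ ‖A‖_{G,d}. -/
open Matrix in
lemma GNorm_key_scalar (n : ℕ) (A B : Matrix (Fin n) (Fin n) ℝ) (hB : B.IsSymm)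
    (h1 : (A - B).PosSemidef) (h2 : (A + B).PosSemidef) (u v : Fin n → ℝ) :
    2 * (u ⬝ᵥ (B *ᵥ v)) ≤ u ⬝ᵥ (A *ᵥ u) + v ⬝ᵥ (A *ᵥ v) := by
  have h1' := h1.dotProduct_mulVec_nonneg (u + v)
  have h2' := h2.dotProduct_mulVec_nonneg (u - v)
  have hsym : v ⬝ᵥ (B *ᵥ u) = u ⬝ᵥ (B *ᵥ v) := by
    simp only [dotProduct, Matrix.mulVec, Finset.mul_sum]
    rw [Finset.sum_comm]
    refine Finset.sum_congr rfl fun i _ => Finset.sum_congr rfl fun j _ => ?_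
    rw [← hB.apply i j]
    ring
  simp only [star_trivial, Matrix.sub_mulVec, Matrix.add_mulVec, Matrix.mulVec_add,
    Matrix.mulVec_sub, dotProduct_add, dotProduct_sub,
    add_dotProduct, sub_dotProduct] at h1' h2'
  linarith

open Matrix in
lemma GNorm_sum_inner_eq (n m d : ℕ) (M : Matrix (Fin n) (Fin m) ℝ)
    (x : Fin n → EuclideanSpace ℝ (Fin d)) (y : Fin m → EuclideanSpace ℝ (Fin d)) :
    ∑ i, ∑ j, M i j * (inner ℝ (x i) (y j) : ℝ)
      = ∑ k : Fin d, (fun i => x i k) ⬝ᵥ (M *ᵥ fun j => y j k) := by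
  simp only [PiLp.inner_apply, RCLike.inner_apply, starRingEnd_apply, star_trivial,
    dotProduct, Matrix.mulVec, Finset.mul_sum]
  rw [show (∑ k : Fin d, ∑ i, ∑ j, x i k * (M i j * y j k))
      = ∑ i, ∑ k : Fin d, ∑ j, x i k * (M i j * y j k) from Finset.sum_comm]
  refine Finset.sum_congr rfl fun i _ => ?_
  rw [Finset.sum_comm]
  refine Finset.sum_congr rfl fun j _ => Finset.sum_congr rfl fun k _ => ?_
  ring

open Matrix in
/-- If -A ⪯ B ⪯ A with A positive semidefinite, then ‖B‖_{G,d} ≤ ‖A‖_{G,d}. -/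
theorem GNorm_mono_loewner (n d : ℕ) (hd : 1 ≤ d)
    (A B : Matrix (Fin n) (Fin n) ℝ) (hA : A.PosSemidef) (hB : B.IsSymm)
    (h1 : (A - B).PosSemidef) (h2 : (A + B).PosSemidef) :
    GNorm d B ≤ GNorm d A := by
  classical
  set sA := { r | ∃ (x : Fin n → EuclideanSpace ℝ (Fin d)) (y : Fin n → EuclideanSpace ℝ (Fin d)),
    (∀ i, ‖x i‖ ≤ 1) ∧ (∀ j, ‖y j‖ ≤ 1) ∧
    r = |∑ i, ∑ j, A i j * (inner ℝ (x i) (y j) : ℝ)| } with hsA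
  have hbdd : BddAbove sA := by
    refine ⟨∑ i, ∑ j, |A i j|, ?_⟩
    rintro r ⟨x, y, hx, hy, rfl⟩
    calc |∑ i, ∑ j, A i j * (inner ℝ (x i) (y j) : ℝ)|
        ≤ ∑ i, |∑ j, A i j * (inner ℝ (x i) (y j) : ℝ)| := Finset.abs_sum_le_sum_abs _ _
      _ ≤ ∑ i, ∑ j, |A i j * (inner ℝ (x i) (y j) : ℝ)| :=
          Finset.sum_le_sum fun i _ => Finset.abs_sum_le_sum_abs _ _
      _ ≤ ∑ i, ∑ j, |A i j| := by
          refine Finset.sum_le_sum fun i _ => Finset.sum_le_sum fun j _ => ?_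
          rw [abs_mul]
          have h3 : |(inner ℝ (x i) (y j) : ℝ)| ≤ 1 := by
            calc |(inner ℝ (x i) (y j) : ℝ)| ≤ ‖x i‖ * ‖y j‖ := abs_real_inner_le_norm _ _
              _ ≤ 1 := by
                  have := hx i; have := hy j
                  nlinarith [norm_nonneg (x i), norm_nonneg (y j)]
          nlinarith [abs_nonneg (A i j)]
  have hA0 : (0 : ℝ) ≤ GNorm d A := by
    refine le_csSup hbdd ?_
    refine ⟨0, 0, fun i => by simp, fun j => by simp, ?_⟩
    simp
  refine Real.sSup_le ?_ hA0
  rintro r ⟨x, y, hx, hy, rfl⟩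
  -- quadratic forms of A
  have hQ : ∀ z : Fin n → EuclideanSpace ℝ (Fin d), (∀ i, ‖z i‖ ≤ 1) →
      0 ≤ ∑ i, ∑ j, A i j * (inner ℝ (z i) (z j) : ℝ) ∧
      ∑ i, ∑ j, A i j * (inner ℝ (z i) (z j) : ℝ) ≤ GNorm d A := by
    intro z hz
    have hnn : 0 ≤ ∑ i, ∑ j, A i j * (inner ℝ (z i) (z j) : ℝ) := by
      rw [GNorm_sum_inner_eq]
      refine Finset.sum_nonneg fun k _ => ?_
      have := hA.dotProduct_mulVec_nonneg (fun i => z i k)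
      simpa using this
    refine ⟨hnn, ?_⟩
    have : |∑ i, ∑ j, A i j * (inner ℝ (z i) (z j) : ℝ)| ∈ sA := ⟨z, z, hz, hz, rfl⟩
    have hle := le_csSup hbdd this
    rwa [abs_of_nonneg hnn] at hle
  obtain ⟨hQx0, hQx⟩ := hQ x hx
  obtain ⟨hQy0, hQy⟩ := hQ y hy
  -- key bound
  have hkey : ∀ sgn : ℝ, sgn = 1 ∨ sgn = -1 →
      2 * (sgn * ∑ i, ∑ j, B i j * (inner ℝ (x i) (y j) : ℝ)) ≤
        (∑ i, ∑ j, A i j * (inner ℝ (x i) (x j) : ℝ)) +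
        (∑ i, ∑ j, A i j * (inner ℝ (y i) (y j) : ℝ)) := by
    intro sgn hsgn
    rw [GNorm_sum_inner_eq, GNorm_sum_inner_eq, GNorm_sum_inner_eq, Finset.mul_sum,
      Finset.mul_sum, ← Finset.sum_add_distrib]
    refine Finset.sum_le_sum fun k _ => ?_
    have hk := GNorm_key_scalar n A B hB h1 h2 (fun i => x i k) (fun j => sgn * y j k)
    have e1 : (fun i => x i k) ⬝ᵥ (B *ᵥ fun j => sgn * y j k)
        = sgn * ((fun i => x i k) ⬝ᵥ (B *ᵥ fun j => y j k)) := by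
      simp only [dotProduct, Matrix.mulVec, Finset.mul_sum]
      refine Finset.sum_congr rfl fun i _ => Finset.sum_congr rfl fun j _ => by ring
    have e2 : (fun j => sgn * y j k) ⬝ᵥ (A *ᵥ fun j => sgn * y j k)
        = (fun j => y j k) ⬝ᵥ (A *ᵥ fun j => y j k) := by
      have hs : sgn * sgn = 1 := by rcases hsgn with h | h <;> simp [h]
      simp only [dotProduct, Matrix.mulVec, Finset.mul_sum]
      refine Finset.sum_congr rfl fun i _ => Finset.sum_congr rfl fun j _ => ?_
      have he : sgn * y i k * (A i j * (sgn * y j k))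
          = (sgn * sgn) * (y i k * (A i j * y j k)) := by ring
      rw [he, hs, one_mul]
    rw [e1, e2] at hk
    linarith
  have hp := hkey 1 (Or.inl rfl)
  have hm := hkey (-1) (Or.inr rfl)
  rw [abs_le']
  constructor
  · nlinarith
  · nlinarith
end

section
/- If A ∈ S^n is a real symmetric tridiagonal matrix, then for every d ∈ ℕ: ‖A‖_{γ,d} = |∑_{i=1}^n a_{ii}| + 2 ∑_{i=1}^{n−1} |a_{i,i+1}|. -/
/-- Sign sequence built from a sequence of ±1 factors. -/
noncomputable def epsAux (s : ℕ → ℝ) : ℕ → ℝ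
  | 0 => 1
  | m + 1 => epsAux s m * s m

lemma epsAux_abs (s : ℕ → ℝ) (hs : ∀ m, |s m| = 1) : ∀ m, |epsAux s m| = 1
  | 0 => by simp [epsAux]
  | m + 1 => by rw [epsAux, abs_mul, epsAux_abs s hs m, hs m, one_mul]

lemma epsAux_sq (s : ℕ → ℝ) (hs : ∀ m, |s m| = 1) (m : ℕ) :
    epsAux s m * epsAux s m = 1 := by
  rw [← abs_mul_abs_self, epsAux_abs s hs m, one_mul]

/-- Decomposition of the quadratic form of a symmetric tridiagonal matrix. -/
lemma tridiag_decomp {n : ℕ} (A : Matrix (Fin (n + 1)) (Fin (n + 1)) ℝ) (hA : A.IsSymm)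
    (htri : ∀ i j : Fin (n + 1), (i : ℕ) + 1 < (j : ℕ) → A i j = 0)
    (c : Fin (n + 1) → Fin (n + 1) → ℝ) (hc : ∀ i j, c i j = c j i) :
    ∑ i, ∑ j, A i j * c i j
      = ∑ i, A i i * c i i
        + 2 * ∑ k : Fin n, A k.castSucc k.succ * c k.castSucc k.succ := by
  have key : ∀ i j : Fin (n + 1), A i j * c i j =
      (if j = i then A i j * c i j else 0)
      + (if (j : ℕ) = (i : ℕ) + 1 then A i j * c i j else 0)
      + (if (i : ℕ) = (j : ℕ) + 1 then A i j * c i j else 0) := by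
    intro i j
    by_cases h1 : j = i
    · subst h1
      rw [if_pos rfl, if_neg (by omega)]
      ring
    · rw [if_neg h1]
      by_cases h2 : (j : ℕ) = (i : ℕ) + 1
      · rw [if_pos h2, if_neg (by omega)]
        ring
      · rw [if_neg h2]
        by_cases h3 : (i : ℕ) = (j : ℕ) + 1
        · rw [if_pos h3]; ring
        · rw [if_neg h3]
          have hne : (i : ℕ) ≠ (j : ℕ) := fun h => h1 (Fin.ext h.symm)
          have hz : A i j = 0 := by
            rcases Nat.lt_or_ge (i : ℕ) (j : ℕ) with h | h
            · exact htri i j (by omega)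
            · exact (hA.apply i j).symm.trans (htri j i (by omega))
          simp [hz]
  have hsplit : ∑ i, ∑ j, A i j * c i j =
      (∑ i : Fin (n + 1), ∑ j : Fin (n + 1), if j = i then A i j * c i j else 0)
      + (∑ i : Fin (n + 1), ∑ j : Fin (n + 1), if (j : ℕ) = (i : ℕ) + 1 then A i j * c i j else 0)
      + (∑ i : Fin (n + 1), ∑ j : Fin (n + 1), if (i : ℕ) = (j : ℕ) + 1 then A i j * c i j else 0) := by
    rw [← Finset.sum_add_distrib, ← Finset.sum_add_distrib]
    refine Finset.sum_congr rfl fun i _ => ?_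
    rw [← Finset.sum_add_distrib, ← Finset.sum_add_distrib]
    exact Finset.sum_congr rfl fun j _ => key i j
  have hS1 : (∑ i : Fin (n + 1), ∑ j : Fin (n + 1), if j = i then A i j * c i j else 0) = ∑ i, A i i * c i i := by
    refine Finset.sum_congr rfl fun i _ => ?_
    simp
  have hS2 : (∑ i : Fin (n + 1), ∑ j : Fin (n + 1), if (j : ℕ) = (i : ℕ) + 1 then A i j * c i j else 0)
      = ∑ k : Fin n, A k.castSucc k.succ * c k.castSucc k.succ := by
    rw [Fin.sum_univ_castSucc]
    have hlast : (∑ j : Fin (n + 1),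
        if (j : ℕ) = ((Fin.last n : Fin (n + 1)) : ℕ) + 1 then A (Fin.last n) j * c (Fin.last n) j else 0) = 0 :=
      Finset.sum_eq_zero fun j _ => if_neg (by have := j.isLt; simp only [Fin.val_last]; omega)
    rw [hlast, add_zero]
    refine Finset.sum_congr rfl fun k _ => ?_
    have hcond : ∀ j : Fin (n + 1), ((j : ℕ) = ((k.castSucc : Fin (n + 1)) : ℕ) + 1) ↔ j = k.succ := by
      intro j
      rw [Fin.ext_iff, Fin.val_succ, Fin.coe_castSucc]
    simp_rw [hcond]
    simp
  have hS3 : (∑ i : Fin (n + 1), ∑ j : Fin (n + 1), if (i : ℕ) = (j : ℕ) + 1 then A i j * c i j else 0)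
      = ∑ k : Fin n, A k.castSucc k.succ * c k.castSucc k.succ := by
    rw [Finset.sum_comm, Fin.sum_univ_castSucc]
    have hlast : (∑ i : Fin (n + 1),
        if (i : ℕ) = ((Fin.last n : Fin (n + 1)) : ℕ) + 1 then A i (Fin.last n) * c i (Fin.last n) else 0) = 0 :=
      Finset.sum_eq_zero fun i _ => if_neg (by have := i.isLt; simp only [Fin.val_last]; omega)
    rw [hlast, add_zero]
    refine Finset.sum_congr rfl fun k _ => ?_
    have hcond : ∀ i : Fin (n + 1), ((i : ℕ) = ((k.castSucc : Fin (n + 1)) : ℕ) + 1) ↔ i = k.succ := by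
      intro i
      rw [Fin.ext_iff, Fin.val_succ, Fin.coe_castSucc]
    simp_rw [hcond]
    simp [hA.apply, hc k.succ k.castSucc]
  rw [hsplit, hS1, hS2, hS3]
  ring

/-- Upper bound for the quadratic form of a symmetric tridiagonal matrix on unit vectors. -/
lemma tridiag_value_le {n d : ℕ} (A : Matrix (Fin (n + 1)) (Fin (n + 1)) ℝ) (hA : A.IsSymm)
    (htri : ∀ i j : Fin (n + 1), (i : ℕ) + 1 < (j : ℕ) → A i j = 0)
    (x : Fin (n + 1) → EuclideanSpace ℝ (Fin d)) (hx : ∀ i, ‖x i‖ = 1) :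
    |∑ i, ∑ j, A i j * (inner ℝ (x i) (x j) : ℝ)|
      ≤ |∑ i, A i i| + 2 * ∑ i : Fin n, |A i.castSucc i.succ| := by
  have hdecomp := tridiag_decomp A hA htri (fun i j => (inner ℝ (x i) (x j) : ℝ))
    (fun i j => by exact real_inner_comm (x j) (x i))
  have hdiag : ∀ i, (inner ℝ (x i) (x i) : ℝ) = 1 := fun i => by
    rw [real_inner_self_eq_norm_mul_norm, hx i, one_mul]
  rw [hdecomp]
  simp only [hdiag, mul_one]
  have hcross : ∀ k : Fin n,
      |A k.castSucc k.succ * (inner ℝ (x k.castSucc) (x k.succ) : ℝ)| ≤ |A k.castSucc k.succ| := by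
    intro k
    rw [abs_mul]
    have h1 : |(inner ℝ (x k.castSucc) (x k.succ) : ℝ)| ≤ 1 := by
      have := abs_real_inner_le_norm (x k.castSucc) (x k.succ)
      rwa [hx, hx, one_mul] at this
    exact mul_le_of_le_one_right (abs_nonneg _) h1
  calc |∑ i, A i i + 2 * ∑ k : Fin n, A k.castSucc k.succ * (inner ℝ (x k.castSucc) (x k.succ) : ℝ)|
      ≤ |∑ i, A i i| + |2 * ∑ k : Fin n, A k.castSucc k.succ * (inner ℝ (x k.castSucc) (x k.succ) : ℝ)| :=
        abs_add_le _ _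
    _ = |∑ i, A i i| + 2 * |∑ k : Fin n, A k.castSucc k.succ * (inner ℝ (x k.castSucc) (x k.succ) : ℝ)| := by
        rw [abs_mul]; norm_num
    _ ≤ |∑ i, A i i| + 2 * ∑ k : Fin n, |A k.castSucc k.succ * (inner ℝ (x k.castSucc) (x k.succ) : ℝ)| := by
        gcongr
        exact Finset.abs_sum_le_sum_abs _ _
    _ ≤ |∑ i, A i i| + 2 * ∑ i : Fin n, |A i.castSucc i.succ| :=
        add_le_add le_rfl (mul_le_mul_of_nonneg_left
          (Finset.sum_le_sum fun k _ => hcross k) (by norm_num))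

/-- γ-seminorm of a symmetric tridiagonal matrix. -/
theorem gammaSemi_tridiagonal (n d : ℕ) (hd : 1 ≤ d)
    (A : Matrix (Fin (n + 1)) (Fin (n + 1)) ℝ) (hA : A.IsSymm)
    (htri : ∀ i j : Fin (n + 1), (i : ℕ) + 1 < (j : ℕ) → A i j = 0) :
    gammaSemi d A = |∑ i, A i i| + 2 * ∑ i : Fin n, |A i.castSucc i.succ| := by
  set T : ℝ := |∑ i, A i i| + 2 * ∑ i : Fin n, |A i.castSucc i.succ| with hT
  have hub : ∀ r ∈ { r | ∃ x : Fin (n + 1) → EuclideanSpace ℝ (Fin d), (∀ i, ‖x i‖ = 1) ∧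
      r = |∑ i, ∑ j, A i j * (inner ℝ (x i) (x j) : ℝ)| }, r ≤ T := by
    rintro r ⟨x, hx, rfl⟩
    exact tridiag_value_le A hA htri x hx
  have hT0 : 0 ≤ T := by positivity
  refine le_antisymm (Real.sSup_le hub hT0) ?_
  -- construct the optimal configuration
  set e : EuclideanSpace ℝ (Fin d) := EuclideanSpace.single (⟨0, hd⟩ : Fin d) (1 : ℝ) with he
  have hee : ‖e‖ = 1 := by rw [he, EuclideanSpace.norm_single, norm_one]
  have heinner : (inner ℝ e e : ℝ) = 1 := by
    rw [real_inner_self_eq_norm_mul_norm, hee, one_mul]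
  set σ : ℝ := if 0 ≤ ∑ i, A i i then 1 else -1 with hσ
  have hσ1 : |σ| = 1 := by rw [hσ]; split <;> simp
  set s : ℕ → ℝ := fun m =>
    if h : m < n then
      (if 0 ≤ A (⟨m, by omega⟩ : Fin (n + 1)) (⟨m + 1, by omega⟩ : Fin (n + 1)) then σ else -σ)
    else 1 with hs
  have hs1 : ∀ m, |s m| = 1 := by
    intro m
    rw [hs]
    dsimp only
    split
    · split
      · exact hσ1
      · rw [abs_neg]; exact hσ1
    · simp
  set ε : ℕ → ℝ := epsAux s with hε
  have hε1 : ∀ m, |ε m| = 1 := epsAux_abs s hs1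
  have hεsq : ∀ m, ε m * ε m = 1 := epsAux_sq s hs1
  set x : Fin (n + 1) → EuclideanSpace ℝ (Fin d) := fun i => ε (i : ℕ) • e with hxdef
  have hxnorm : ∀ i, ‖x i‖ = 1 := by
    intro i
    rw [hxdef]
    dsimp only
    rw [norm_smul, hee, mul_one, Real.norm_eq_abs, hε1]
  have hinner : ∀ i j, (inner ℝ (x i) (x j) : ℝ) = ε (i : ℕ) * ε (j : ℕ) := by
    intro i j
    rw [hxdef]
    dsimp only
    rw [real_inner_smul_left, real_inner_smul_right, heinner, mul_one]
  have hdecomp := tridiag_decomp A hA htri (fun i j => ε (i : ℕ) * ε (j : ℕ))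
    (fun i j => mul_comm _ _)
  have hcross : ∀ k : Fin n,
      A k.castSucc k.succ * (ε ((k.castSucc : Fin (n + 1)) : ℕ) * ε ((k.succ : Fin (n + 1)) : ℕ))
        = σ * |A k.castSucc k.succ| := by
    intro k
    have hcs : ((k.castSucc : Fin (n + 1)) : ℕ) = (k : ℕ) := Fin.coe_castSucc k
    have hsc : ((k.succ : Fin (n + 1)) : ℕ) = (k : ℕ) + 1 := Fin.val_succ k
    rw [hcs, hsc]
    have hεs : ε ((k : ℕ) + 1) = ε (k : ℕ) * s (k : ℕ) := rfl
    rw [hεs, ← mul_assoc (ε ((k : Fin n) : ℕ)), hεsq, one_mul]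
    have hklt : (k : ℕ) < n := k.isLt
    have hcast : (⟨(k : ℕ), by omega⟩ : Fin (n + 1)) = k.castSucc := by
      exact Fin.ext (by simp)
    have hsucc : (⟨(k : ℕ) + 1, by omega⟩ : Fin (n + 1)) = k.succ := by
      exact Fin.ext (by simp)
    rw [hs]
    dsimp only
    rw [dif_pos hklt, hcast, hsucc]
    by_cases hpos : 0 ≤ A k.castSucc k.succ
    · rw [if_pos hpos, abs_of_nonneg hpos]; ring
    · rw [if_neg hpos, abs_of_neg (lt_of_not_ge hpos)]; ring
  have hval : |∑ i, ∑ j, A i j * (inner ℝ (x i) (x j) : ℝ)| = T := by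
    simp only [hinner]
    rw [hdecomp]
    simp only [hεsq, mul_one]
    have hsum : ∑ k : Fin n, A k.castSucc k.succ * (ε ((k.castSucc : Fin (n + 1)) : ℕ) * ε ((k.succ : Fin (n + 1)) : ℕ))
        = σ * ∑ i : Fin n, |A i.castSucc i.succ| := by
      rw [Finset.mul_sum]
      exact Finset.sum_congr rfl fun k _ => hcross k
    rw [hsum]
    have hσσ : σ * σ = 1 := by rw [← abs_mul_abs_self, hσ1, one_mul]
    have hσD : σ * (∑ i, A i i) = |∑ i, A i i| := by
      rw [hσ]
      split
      · rw [one_mul, abs_of_nonneg ‹_›]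
      · rw [abs_of_neg (lt_of_not_ge ‹_›)]; ring
    have habs : |∑ i, A i i + 2 * (σ * ∑ i : Fin n, |A i.castSucc i.succ|)|
        = |σ * (∑ i, A i i + 2 * (σ * ∑ i : Fin n, |A i.castSucc i.succ|))| := by
      rw [abs_mul, hσ1, one_mul]
    rw [habs]
    have hexp : σ * (∑ i, A i i + 2 * (σ * ∑ i : Fin n, |A i.castSucc i.succ|))
        = |∑ i, A i i| + 2 * ∑ i : Fin n, |A i.castSucc i.succ| := by
      have : σ * (∑ i, A i i + 2 * (σ * ∑ i : Fin n, |A i.castSucc i.succ|))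
          = σ * (∑ i, A i i) + 2 * ((σ * σ) * ∑ i : Fin n, |A i.castSucc i.succ|) := by ring
      rw [this, hσσ, hσD, one_mul]
    rw [hexp, hT, abs_of_nonneg hT0]
  have hmem : T ∈ { r | ∃ x : Fin (n + 1) → EuclideanSpace ℝ (Fin d), (∀ i, ‖x i‖ = 1) ∧
      r = |∑ i, ∑ j, A i j * (inner ℝ (x i) (x j) : ℝ)| } := ⟨x, hxnorm, hval.symm⟩
  exact le_csSup ⟨T, hub⟩ hmem
end

section
/- Let A = [[A₁, −B],[−Bᵀ, A₂]] ∈ S^{m+n} where A₁ ∈ S^m and A₂ ∈ S^n have nonnegative entries and B ∈ ℝ^{m×n} has nonnegative entries. Then for every d ∈ ℕ: ‖A‖_{γ,d} = ‖A‖_{Γ,d} = ‖A‖_{G,d} = ∑_{i,j} |a_{ij}|. -/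
lemma bound_aux {ι κ : Type*} [Fintype ι] [Fintype κ] {d : ℕ} (A : Matrix ι κ ℝ)
    (x : ι → EuclideanSpace ℝ (Fin d)) (y : κ → EuclideanSpace ℝ (Fin d))
    (hx : ∀ i, ‖x i‖ ≤ 1) (hy : ∀ j, ‖y j‖ ≤ 1) :
    |∑ i, ∑ j, A i j * (inner ℝ (x i) (y j) : ℝ)| ≤ ∑ i, ∑ j, |A i j| := by
  calc |∑ i, ∑ j, A i j * (inner ℝ (x i) (y j) : ℝ)|
      ≤ ∑ i, |∑ j, A i j * (inner ℝ (x i) (y j) : ℝ)| := Finset.abs_sum_le_sum_abs _ _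
    _ ≤ ∑ i, ∑ j, |A i j * (inner ℝ (x i) (y j) : ℝ)| :=
        Finset.sum_le_sum fun i _ => Finset.abs_sum_le_sum_abs _ _
    _ ≤ ∑ i, ∑ j, |A i j| := by
        refine Finset.sum_le_sum fun i _ => Finset.sum_le_sum fun j _ => ?_
        rw [abs_mul]
        have h1 : |(inner ℝ (x i) (y j) : ℝ)| ≤ 1 := by
          refine (abs_real_inner_le_norm (x i) (y j)).trans ?_
          exact mul_le_one₀ (hx i) (norm_nonneg _) (hy j)
        exact mul_le_of_le_one_right (abs_nonneg _) h1

/-- Grothendieck d-norms of a block matrix [[A₁,−B],[−Bᵀ,A₂]] with nonnegative blocks. -/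
theorem grothendieck_norms_signed_block (m n d : ℕ) (hd : 1 ≤ d)
    (A₁ : Matrix (Fin m) (Fin m) ℝ) (A₂ : Matrix (Fin n) (Fin n) ℝ)
    (B : Matrix (Fin m) (Fin n) ℝ)
    (hA₁ : A₁.IsSymm) (hA₂ : A₂.IsSymm)
    (hA₁pos : ∀ i j, 0 ≤ A₁ i j) (hA₂pos : ∀ i j, 0 ≤ A₂ i j)
    (hBpos : ∀ i j, 0 ≤ B i j) :
    gammaSemi d (Matrix.fromBlocks A₁ (-B) (-B.transpose) A₂) =
      ∑ i, ∑ j, |Matrix.fromBlocks A₁ (-B) (-B.transpose) A₂ i j| ∧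
    GammaNorm d (Matrix.fromBlocks A₁ (-B) (-B.transpose) A₂) =
      ∑ i, ∑ j, |Matrix.fromBlocks A₁ (-B) (-B.transpose) A₂ i j| ∧
    GNorm d (Matrix.fromBlocks A₁ (-B) (-B.transpose) A₂) =
      ∑ i, ∑ j, |Matrix.fromBlocks A₁ (-B) (-B.transpose) A₂ i j| := by
  set A := Matrix.fromBlocks A₁ (-B) (-B.transpose) A₂ with hA
  set M := ∑ i, ∑ j, |A i j| with hM
  have hM0 : 0 ≤ M := Finset.sum_nonneg fun i _ =>
    Finset.sum_nonneg fun j _ => abs_nonneg _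
  -- the test vector
  set e : EuclideanSpace ℝ (Fin d) := EuclideanSpace.single (⟨0, hd⟩ : Fin d) (1 : ℝ) with he
  have hne : ‖e‖ = 1 := by simp [he, EuclideanSpace.norm_single]
  have hee : (inner ℝ e e : ℝ) = 1 := by
    simp [he, EuclideanSpace.inner_single_left, EuclideanSpace.single_apply]
  set x : Fin m ⊕ Fin n → EuclideanSpace ℝ (Fin d) :=
    Sum.elim (fun _ => e) (fun _ => -e) with hx
  have hxnorm : ∀ i, ‖x i‖ = 1 := by rintro (i | i) <;> simp [hx, hne]
  have hxnorm' : ∀ i, ‖x i‖ ≤ 1 := fun i => (hxnorm i).le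
  have hsum : (∑ i, ∑ j, A i j * (inner ℝ (x i) (x j) : ℝ)) = M := by
    refine Finset.sum_congr rfl fun i _ => Finset.sum_congr rfl fun j _ => ?_
    rcases i with i | i <;> rcases j with j | j <;>
      simp [hx, hA, Matrix.fromBlocks, hee, hne, inner_neg_neg, inner_neg_left, inner_neg_right,
        abs_of_nonneg, hA₁pos, hA₂pos, hBpos, abs_of_nonpos, neg_nonpos_of_nonneg]
  have hval : M = |∑ i, ∑ j, A i j * (inner ℝ (x i) (x j) : ℝ)| := by
    rw [hsum, abs_of_nonneg hM0]
  constructor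
  · apply le_antisymm
    · apply Real.sSup_le _ hM0
      rintro r ⟨y, hy, rfl⟩
      exact bound_aux A y y (fun i => (hy i).le) (fun i => (hy i).le)
    · apply le_csSup
      · refine ⟨M, ?_⟩
        rintro r ⟨y, hy, rfl⟩
        exact bound_aux A y y (fun i => (hy i).le) (fun i => (hy i).le)
      · exact ⟨x, hxnorm, hval⟩
  constructor
  · apply le_antisymm
    · apply Real.sSup_le _ hM0
      rintro r ⟨y, hy, rfl⟩
      exact bound_aux A y y hy hy
    · apply le_csSup
      · refine ⟨M, ?_⟩
        rintro r ⟨y, hy, rfl⟩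
        exact bound_aux A y y hy hy
      · exact ⟨x, hxnorm', hval⟩
  · apply le_antisymm
    · apply Real.sSup_le _ hM0
      rintro r ⟨y, z, hy, hz, rfl⟩
      exact bound_aux A y z hy hz
    · apply le_csSup
      · refine ⟨M, ?_⟩
        rintro r ⟨y, z, hy, hz, rfl⟩
        exact bound_aux A y z hy hz
      · exact ⟨x, x, hxnorm', hxnorm', hval⟩
end

section
/- For a real symmetric matrix A ∈ S^n and any d ∈ ℕ, the complex Grothendieck d-seminorm equals the real Grothendieck 2d-seminorm: ‖A‖_{γ,d}^ℂ = ‖A‖_{γ,2d}^ℝ, where ‖A‖_{γ,d}^ℂ := max { |∑_{i,j} a_{ij}⟨z_i,z_j⟩_ℂ| : z_i ∈ ℂ^d, ‖z_i‖ = 1 } and ‖A‖_{γ,2d}^ℝ := max { |∑_{i,j} a_{ij}⟨x_i,x_j⟩_ℝ| : x_i ∈ ℝ^{2d}, ‖x_i‖ = 1 }. -/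
noncomputable def gammaSemiC {ι : Type*} [Fintype ι] (d : ℕ) (A : Matrix ι ι ℝ) : ℝ :=
  sSup { r | ∃ z : ι → EuclideanSpace ℂ (Fin d), (∀ i, ‖z i‖ = 1) ∧
    r = ‖∑ i, ∑ j, (A i j : ℂ) * (inner ℂ (z i) (z j) : ℂ)‖ }


lemma sym_abs_eq {ι : Type*} [Fintype ι] (A : Matrix ι ι ℝ) (hA : A.IsSymm)
    {d : ℕ} (z : ι → EuclideanSpace ℂ (Fin d)) :
    ‖∑ i, ∑ j, (A i j : ℂ) * (inner ℂ (z i) (z j) : ℂ)‖ =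
      |∑ i, ∑ j, A i j * (inner ℂ (z i) (z j) : ℂ).re| := by
  set S := ∑ i, ∑ j, (A i j : ℂ) * (inner ℂ (z i) (z j) : ℂ) with hS
  have h1 : S.im = ∑ i, ∑ j, A i j * (inner ℂ (z i) (z j) : ℂ).im := by
    simp [hS, Complex.im_sum, Complex.mul_im]
  have key : ∀ i j : ι, A i j * (inner ℂ (z i) (z j) : ℂ).im
      = -(A j i * (inner ℂ (z j) (z i) : ℂ).im) := by
    intro i j
    have h3 : (inner ℂ (z j) (z i) : ℂ).im = -(inner ℂ (z i) (z j) : ℂ).im := by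
      rw [(inner_conj_symm (z j) (z i)).symm, Complex.conj_im]
    have h4 : A j i = A i j := hA.apply i j
    rw [h3, h4]; ring
  have h2 : (∑ i, ∑ j, A i j * (inner ℂ (z i) (z j) : ℂ).im)
      = -∑ i, ∑ j, A i j * (inner ℂ (z i) (z j) : ℂ).im := by
    calc (∑ i, ∑ j, A i j * (inner ℂ (z i) (z j) : ℂ).im)
        = ∑ i, ∑ j, -(A j i * (inner ℂ (z j) (z i) : ℂ).im) :=
          Finset.sum_congr rfl fun i _ => Finset.sum_congr rfl fun j _ => key i j
      _ = -∑ i, ∑ j, A j i * (inner ℂ (z j) (z i) : ℂ).im := by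
          simp [Finset.sum_neg_distrib]
      _ = -∑ i, ∑ j, A i j * (inner ℂ (z i) (z j) : ℂ).im := by
          rw [Finset.sum_comm]
  have him : S.im = 0 := by rw [h1]; linarith [h2]
  have hre : S.re = ∑ i, ∑ j, A i j * (inner ℂ (z i) (z j) : ℂ).re := by
    simp [hS, Complex.re_sum, Complex.mul_re]
  have hSr : S = ((S.re : ℝ) : ℂ) := Complex.ext (by simp) (by simp [him])
  rw [hSr, Complex.norm_real, Real.norm_eq_abs, hre]

/-- For a real symmetric matrix, the complex γ-d-seminorm equals the real γ-2d-seminorm. -/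
theorem gammaSemiC_eq_gammaSemi_two_mul (n d : ℕ) (hd : 1 ≤ d)
    (A : Matrix (Fin n) (Fin n) ℝ) (hA : A.IsSymm) :
    gammaSemiC d A = gammaSemi (2 * d) A := by
  have hfr : Module.finrank ℝ (EuclideanSpace ℂ (Fin d)) = 2 * d := by
    rw [← Module.finrank_mul_finrank ℝ ℂ (EuclideanSpace ℂ (Fin d))]
    simp [Complex.finrank_real_complex, finrank_euclideanSpace]
  let e : EuclideanSpace ℂ (Fin d) ≃ₗᵢ[ℝ] EuclideanSpace ℝ (Fin (2 * d)) :=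
    (stdOrthonormalBasis ℝ (EuclideanSpace ℂ (Fin d))).repr.trans
      (LinearIsometryEquiv.piLpCongrLeft 2 ℝ ℝ (finCongr hfr))
  have hinner : ∀ z w : EuclideanSpace ℂ (Fin d),
      (inner ℝ (e z) (e w) : ℝ) = (inner ℂ z w : ℂ).re := by
    intro z w
    rw [LinearIsometryEquiv.inner_map_map]
    simp [PiLp.inner_apply, Complex.re_sum]
  unfold gammaSemiC gammaSemi
  congr 1
  ext r
  constructor
  · rintro ⟨z, hz, rfl⟩
    refine ⟨fun i => e (z i), fun i => by simp [hz i], ?_⟩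
    rw [sym_abs_eq A hA z]
    congr 1
    exact Finset.sum_congr rfl fun i _ => Finset.sum_congr rfl fun j _ => by
      rw [hinner]
  · rintro ⟨x, hx, rfl⟩
    refine ⟨fun i => e.symm (x i), fun i => by simp [hx i], ?_⟩
    rw [sym_abs_eq A hA]
    congr 1
    exact Finset.sum_congr rfl fun i _ => Finset.sum_congr rfl fun j _ => by
      rw [← hinner]; simp
end

section
/- Every extreme point of the convex hull of Γ̄^n_d (the set of n×n real rank-≤d subcorrelation matrices) lies in Γ̄^n_q, where q = ⌊(−1+√(1+8n))/2⌋ + 1. In particular, every extreme point has rank at most q. -/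
open Matrix Finset

/-- The set of n×n rank-≤ d subcorrelation matrices. -/
def subCorr (n d : ℕ) : Set (Matrix (Fin n) (Fin n) ℝ) :=
  { G | G.PosSemidef ∧ (∀ i, G i i ∈ Set.Icc (0:ℝ) 1) ∧ G.rank ≤ d }

private lemma quad_abs_le' {ι : Type*} [Fintype ι] (S : Matrix ι ι ℝ) (x : ι → ℝ) :
    |x ⬝ᵥ S *ᵥ x| ≤ (∑ j, ∑ k, |S j k|) * (∑ l, x l ^ 2) := by
  have hT : ∀ j k : ι, |x j| * |x k| ≤ ∑ l, x l ^ 2 := by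
    intro j k
    have h1 : x j ^ 2 ≤ ∑ l, x l ^ 2 :=
      Finset.single_le_sum (fun l _ => sq_nonneg (x l)) (mem_univ j)
    have h2 : x k ^ 2 ≤ ∑ l, x l ^ 2 :=
      Finset.single_le_sum (fun l _ => sq_nonneg (x l)) (mem_univ k)
    nlinarith [abs_nonneg (x j), abs_nonneg (x k), sq_abs (x j), sq_abs (x k),
      sq_nonneg (|x j| - |x k|)]
  have hexp : x ⬝ᵥ S *ᵥ x = ∑ j, ∑ k, x j * (S j k * x k) := by
    simp [dotProduct, mulVec, Finset.mul_sum]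
  rw [hexp, Finset.sum_mul]
  calc |∑ j, ∑ k, x j * (S j k * x k)| ≤ ∑ j, |∑ k, x j * (S j k * x k)| :=
        Finset.abs_sum_le_sum_abs _ _
    _ ≤ ∑ j, ∑ k, |x j * (S j k * x k)| :=
        Finset.sum_le_sum fun j _ => Finset.abs_sum_le_sum_abs _ _
    _ ≤ ∑ j, (∑ k, |S j k|) * (∑ l, x l ^ 2) := by
        refine Finset.sum_le_sum fun j _ => ?_
        rw [Finset.sum_mul]
        refine Finset.sum_le_sum fun k _ => ?_
        have : |x j * (S j k * x k)| = |S j k| * (|x j| * |x k|) := by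
          rw [abs_mul, abs_mul]; ring
        rw [this]
        exact mul_le_mul_of_nonneg_left (hT j k) (abs_nonneg _)

private lemma posSemidef_one_add' {ι : Type*} [Fintype ι] [DecidableEq ι] {S : Matrix ι ι ℝ}
    (hS : S.IsHermitian) (h : ∀ x : ι → ℝ, |x ⬝ᵥ S *ᵥ x| ≤ ∑ l, x l ^ 2) :
    (1 + S).PosSemidef := by
  rw [Matrix.posSemidef_iff_dotProduct_mulVec]
  constructor
  · exact isHermitian_one.add hS
  · intro x
    have hb := h x
    have hx : star x ⬝ᵥ (1 + S) *ᵥ x = (∑ l, x l ^ 2) + x ⬝ᵥ S *ᵥ x := by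
      simp only [add_mulVec, one_mulVec, dotProduct_add, star_trivial, dotProduct, sq,
        Pi.add_apply, mul_add]
      rw [Finset.sum_add_distrib]
    rw [hx]
    linarith [(abs_le.mp hb).1]

/-- Every extreme point of the convex hull of the rank-≤ d subcorrelation matrices
lies among the rank-≤ q subcorrelation matrices, q = ⌊(−1+√(1+8n))/2⌋ + 1. -/
theorem extremePoints_convexHull_subCorr (n d : ℕ) :
    Set.extremePoints ℝ (convexHull ℝ (subCorr n d)) ⊆
      subCorr n (⌊(-1 + Real.sqrt (1 + 8 * (n : ℝ))) / 2⌋₊ + 1) := by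
  classical
  intro G hGx
  obtain ⟨hpsd, hdiag, hrank⟩ : G ∈ subCorr n d := extremePoints_convexHull_subset hGx
  refine ⟨hpsd, hdiag, ?_⟩
  by_contra hcon
  push_neg at hcon
  set q0 : ℕ := ⌊(-1 + Real.sqrt (1 + 8 * (n : ℝ))) / 2⌋₊ with hq0
  set r : ℕ := G.rank with hr
  have hrq : q0 + 2 ≤ r := hcon
  -- numeric bound : 2 * n < r * (r - 1)
  have hnum : 2 * n < r * (r - 1) := by
    have h1 : (-1 + Real.sqrt (1 + 8 * (n : ℝ))) / 2 < (q0 : ℝ) + 1 :=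
      Nat.lt_floor_add_one _
    have hcast : ((q0 : ℝ)) + 2 ≤ (r : ℝ) := by exact_mod_cast hrq
    have h2 : Real.sqrt (1 + 8 * (n : ℝ)) < 2 * (r : ℝ) - 1 := by linarith
    have hrpos : (0 : ℝ) < 2 * (r : ℝ) - 1 := by linarith
    have h3 : (1 : ℝ) + 8 * n < (2 * (r : ℝ) - 1) ^ 2 := (Real.sqrt_lt' hrpos).mp h2
    have h4 : (2 : ℝ) * n < (r : ℝ) * ((r : ℝ) - 1) := by nlinarith
    have hr1 : 1 ≤ r := by omega
    have h5 : ((r * (r - 1) : ℕ) : ℝ) = (r : ℝ) * ((r : ℝ) - 1) := by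
      push_cast [Nat.cast_sub hr1]
      ring
    have : ((2 * n : ℕ) : ℝ) < ((r * (r - 1) : ℕ) : ℝ) := by
      rw [h5]; push_cast; linarith
    exact_mod_cast this
  -- spectral setup
  have h := hpsd.1
  set lam := h.eigenvalues with hlam
  set U : Matrix (Fin n) (Fin n) ℝ := (h.eigenvectorUnitary : Matrix (Fin n) (Fin n) ℝ) with hU
  have hGe : ∀ i k, G i k = ∑ j, U i j * lam j * U k j := by
    intro i k
    conv_lhs => rw [h.spectral_theorem, Unitary.conjStarAlgAut_apply]
    rw [Matrix.mul_apply]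
    refine Finset.sum_congr rfl fun j _ => ?_
    rw [Matrix.mul_diagonal]
    simp only [Matrix.star_apply, star_trivial, Function.comp_apply,
      RCLike.ofReal_real_eq_id, id_eq]
    rfl
  have hU2 : ∀ j k, (∑ i, U i j * U i k) = if j = k then (1:ℝ) else 0 := by
    intro j k
    have := congrFun (congrFun (Matrix.mem_unitaryGroup_iff'.mp h.eigenvectorUnitary.2) j) k
    rw [Matrix.mul_apply] at this
    simpa only [Matrix.star_apply, star_trivial, Matrix.one_apply] using this
  have hlam0 : ∀ j, 0 ≤ lam j := fun j => hpsd.eigenvalues_nonneg j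
  set ι := {j : Fin n // lam j ≠ 0} with hι
  have hcard : Fintype.card ι = r := (h.rank_eq_card_non_zero_eigs).symm
  set B : Matrix (Fin n) ι ℝ := fun i j => U i j.1 * Real.sqrt (lam j.1) with hB
  have hBBt : B * Bᵀ = G := by
    ext i k
    rw [Matrix.mul_apply]
    have step : ∀ j : ι, B i j * Bᵀ j k = U i j.1 * lam j.1 * U k j.1 := by
      intro j
      rw [Matrix.transpose_apply, hB]
      dsimp only
      have hre : U i j.1 * Real.sqrt (lam j.1) * (U k j.1 * Real.sqrt (lam j.1))
          = U i j.1 * (Real.sqrt (lam j.1) * Real.sqrt (lam j.1)) * U k j.1 := by ring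
      rw [hre, Real.mul_self_sqrt (hlam0 j.1)]
    rw [Finset.sum_congr rfl fun j _ => step j]
    rw [hGe i k]
    rw [← Finset.sum_subtype (Finset.univ.filter fun j => lam j ≠ 0)
      (by simp) (fun j => U i j * lam j * U k j)]
    rw [Finset.sum_filter_of_ne]
    intro x _ hx h0
    exact hx (by rw [h0]; ring)
  have hBtB : Bᵀ * B = Matrix.diagonal (fun j : ι => lam j.1) := by
    ext j k
    rw [Matrix.mul_apply]
    have step : ∀ i, Bᵀ j i * B i k =
        (Real.sqrt (lam j.1) * Real.sqrt (lam k.1)) * (U i j.1 * U i k.1) := by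
      intro i; rw [Matrix.transpose_apply, hB]; dsimp only; ring
    rw [Finset.sum_congr rfl fun i _ => step i, ← Finset.mul_sum, hU2]
    by_cases hjk : j = k
    · subst hjk
      simp [Real.mul_self_sqrt (hlam0 j.1)]
    · have : j.1 ≠ k.1 := fun hv => hjk (Subtype.ext hv)
      simp [Matrix.diagonal_apply_ne _ hjk, this]
  -- the perturbation linear map
  set Smat : (Sym2 ι → ℝ) → Matrix ι ι ℝ := fun c j k => c s(j, k) with hSmat
  have hSmat_add : ∀ c c', Smat (c + c') = Smat c + Smat c' := fun c c' => rfl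
  have hSmat_smul : ∀ (a : ℝ) c, Smat (a • c) = a • Smat c := fun a c => rfl
  obtain ⟨c, hc0, hLc⟩ : ∃ c : Sym2 ι → ℝ, c ≠ 0 ∧ (fun i => (B * Smat c * Bᵀ) i i) = 0 := by
    let L : (Sym2 ι → ℝ) →ₗ[ℝ] (Fin n → ℝ) :=
      { toFun := fun c => fun i => (B * Smat c * Bᵀ) i i
        map_add' := by
          intro c c'
          funext i
          rw [hSmat_add, Matrix.mul_add, Matrix.add_mul]
          simp [Matrix.add_apply]
        map_smul' := by
          intro a c
          funext i
          rw [hSmat_smul, Matrix.mul_smul, Matrix.smul_mul]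
          simp [Matrix.smul_apply] }
    by_contra hno
    push_neg at hno
    have hinj : Function.Injective L := by
      rw [← LinearMap.ker_eq_bot]
      rw [LinearMap.ker_eq_bot']
      intro m hm
      by_contra hm0
      exact hno m hm0 hm
    have hle := LinearMap.finrank_le_finrank_of_injective hinj
    rw [Module.finrank_pi, Module.finrank_pi, Sym2.card, hcard, Fintype.card_fin] at hle
    have hc2 : (r + 1).choose 2 = (r + 1) * r / 2 := by rw [Nat.choose_two_right]; simp
    obtain ⟨m, hm⟩ := Nat.even_mul_succ_self r
    have hm' : (r + 1) * r = m + m := by rw [mul_comm]; exact hm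
    have hle2 : r * (r - 1) ≤ (r + 1) * r := Nat.mul_le_mul (Nat.le_succ r) (Nat.sub_le r 1)
    omega
  set S : Matrix ι ι ℝ := Smat c with hS
  have hSsymm : Sᵀ = S := by
    ext j k
    rw [Matrix.transpose_apply, hS, hSmat]
    dsimp only
    rw [Sym2.eq_swap]
  have hSherm : S.IsHermitian := by
    rw [Matrix.IsHermitian, Matrix.conjTranspose_eq_transpose_of_trivial]
    exact hSsymm
  set H : Matrix (Fin n) (Fin n) ℝ := B * S * Bᵀ with hH
  have hHdiag : ∀ i, H i i = 0 := fun i => congrFun hLc i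
  have hH0 : H ≠ 0 := by
    intro h0
    apply hc0
    have h2 : (Bᵀ * B) * S * (Bᵀ * B) = 0 := by
      have : Bᵀ * H * B = 0 := by rw [h0, Matrix.mul_zero, Matrix.zero_mul]
      calc (Bᵀ * B) * S * (Bᵀ * B) = Bᵀ * (B * S * Bᵀ) * B := by
            simp only [Matrix.mul_assoc]
        _ = 0 := this
    rw [hBtB] at h2
    funext s
    induction s using Sym2.ind with
    | _ j k =>
      have h3 := congrFun (congrFun h2 j) k
      rw [Matrix.mul_diagonal, Matrix.diagonal_mul] at h3
      simp only [Matrix.zero_apply, Pi.zero_apply] at h3 ⊢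
      have := mul_eq_zero.mp h3
      rcases this with h4 | h4
      · rcases mul_eq_zero.mp h4 with h5 | h5
        · exact absurd h5 j.2
        · exact h5
      · exact absurd h4 k.2
  -- scale
  set Cb : ℝ := ∑ j, ∑ k, |S j k| with hCb
  have hCb0 : 0 ≤ Cb := Finset.sum_nonneg fun j _ =>
    Finset.sum_nonneg fun k _ => abs_nonneg _
  set ε : ℝ := 1 / (Cb + 1) with hε
  have hεpos : 0 < ε := by positivity
  have hbound : ∀ (t : ℝ), |t| ≤ ε → ∀ x : ι → ℝ, |x ⬝ᵥ (t • S) *ᵥ x| ≤ ∑ l, x l ^ 2 := by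
    intro t ht x
    have h1 := quad_abs_le' S x
    have hTnn : 0 ≤ ∑ l, x l ^ 2 := Finset.sum_nonneg fun l _ => sq_nonneg _
    have h2 : x ⬝ᵥ (t • S) *ᵥ x = t * (x ⬝ᵥ S *ᵥ x) := by
      rw [Matrix.smul_mulVec]
      simp [dotProduct, Finset.mul_sum]
      exact Finset.sum_congr rfl fun l _ => by ring
    rw [h2, abs_mul]
    have h3 : |t| * |x ⬝ᵥ S *ᵥ x| ≤ ε * (Cb * (∑ l, x l ^ 2)) := by
      apply mul_le_mul ht h1 (abs_nonneg _) hεpos.le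
    have h4 : ε * (Cb * (∑ l, x l ^ 2)) ≤ ∑ l, x l ^ 2 := by
      have e1 : Cb * (∑ l, x l ^ 2) ≤ (Cb + 1) * (∑ l, x l ^ 2) :=
        mul_le_mul_of_nonneg_right (by linarith) hTnn
      have e2 : ε * ((Cb + 1) * (∑ l, x l ^ 2)) = ∑ l, x l ^ 2 := by
        rw [hε, ← mul_assoc]
        rw [one_div, inv_mul_cancel₀ (by linarith : Cb + (1:ℝ) ≠ 0), one_mul]
      calc ε * (Cb * (∑ l, x l ^ 2)) ≤ ε * ((Cb + 1) * (∑ l, x l ^ 2)) :=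
            mul_le_mul_of_nonneg_left e1 hεpos.le
        _ = ∑ l, x l ^ 2 := e2
    linarith
  -- hermitian of t • S
  have htherm : ∀ t : ℝ, (t • S).IsHermitian := by
    intro t
    rw [Matrix.IsHermitian, Matrix.conjTranspose_eq_transpose_of_trivial,
      Matrix.transpose_smul, hSsymm]
  -- the two perturbed matrices
  have key : ∀ (t : ℝ), |t| ≤ ε → G + t • H ∈ subCorr n d := by
    intro t ht
    have hfact : G + t • H = B * (1 + t • S) * Bᵀ := by
      rw [Matrix.mul_add, Matrix.add_mul, Matrix.mul_one, hBBt, Matrix.mul_smul,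
        Matrix.smul_mul, hH]
    have hpsd1 : (1 + t • S).PosSemidef := posSemidef_one_add' (htherm t) (hbound t ht)
    refine ⟨?_, ?_, ?_⟩
    · rw [hfact]
      have := hpsd1.mul_mul_conjTranspose_same B
      rwa [Matrix.conjTranspose_eq_transpose_of_trivial] at this
    · intro i
      have : (G + t • H) i i = G i i := by
        simp [Matrix.add_apply, Matrix.smul_apply, hHdiag i]
      rw [this]
      exact hdiag i
    · rw [hfact]
      calc (B * (1 + t • S) * Bᵀ).rank ≤ (B * (1 + t • S)).rank :=
            Matrix.rank_mul_le_left _ _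
        _ ≤ B.rank := Matrix.rank_mul_le_left _ _
        _ ≤ Fintype.card ι := Matrix.rank_le_card_width B
        _ = r := hcard
        _ ≤ d := hrank
  have hmemP : G + ε • H ∈ convexHull ℝ (subCorr n d) :=
    subset_convexHull ℝ _ (key ε (le_of_eq (abs_of_pos hεpos)))
  have hmemM : G + (-ε) • H ∈ convexHull ℝ (subCorr n d) :=
    subset_convexHull ℝ _ (key (-ε) (le_of_eq (by rw [abs_neg]; exact abs_of_pos hεpos)))
  have hseg : G ∈ openSegment ℝ (G + (-ε) • H) (G + ε • H) := by
    refine ⟨1/2, 1/2, by norm_num, by norm_num, by norm_num, ?_⟩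
    module
  have hpair := hGx.2 hmemM hmemP hseg
  have hεH : ε • H = 0 := by
    have h' : G + ε • H = G := hGx.2 hmemP hmemM (by rw [openSegment_symm]; exact hseg)
    have := add_eq_left.mp h'
    exact this
  rcases smul_eq_zero.mp hεH with h' | h'
  · exact absurd h' (ne_of_gt hεpos)
  · exact hH0 h'
end

section
/- If d(d+1)/2 > n, then for every real symmetric A ∈ S^n one has ‖A‖_{γ,d} = ‖A‖_{γ,n} and ‖A‖_{Γ,d} = ‖A‖_{Γ,n}, i.e. the Grothendieck d-seminorm and d-norm stabilize at d-values with d(d+1)/2 > n. -/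
open Matrix BigOperators

section Helpers

lemma real_conjT {α β : Type*} [Fintype α] [Fintype β] (B : Matrix α β ℝ) : Bᴴ = Bᵀ := by
  ext i j; simp [Matrix.conjTranspose_apply]

lemma spectral_entry {m : Type*} [Fintype m] [DecidableEq m] {X : Matrix m m ℝ}
    (hX : X.IsHermitian) (i j : m) :
    X i j = ∑ k, hX.eigenvalues k * (hX.eigenvectorUnitary : Matrix m m ℝ) i k *
      (hX.eigenvectorUnitary : Matrix m m ℝ) j k := by
  conv_lhs => rw [hX.spectral_theorem, Unitary.conjStarAlgAut_apply]
  rw [Matrix.mul_apply]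
  refine Finset.sum_congr rfl fun k _ => ?_
  rw [Matrix.mul_diagonal]
  simp only [Matrix.star_apply, star_trivial, Function.comp_apply, RCLike.ofReal_real_eq_id, id_eq]
  ring

lemma one_add_smul_psd {m : Type*} [Fintype m] [DecidableEq m] {Δ : Matrix m m ℝ}
    (hΔ : Δ.IsHermitian) (a : ℝ)
    (hw : ∀ k, 0 ≤ 1 + a * hΔ.eigenvalues k) : (1 + a • Δ).PosSemidef := by
  set V : Matrix m m ℝ := (hΔ.eigenvectorUnitary : Matrix m m ℝ) with hV
  have hVV : V * star V = 1 := (Matrix.mem_unitaryGroup_iff).mp hΔ.eigenvectorUnitary.2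
  have key : 1 + a • Δ = V * Matrix.diagonal (fun k => 1 + a * hΔ.eigenvalues k) * star V := by
    have hd : Matrix.diagonal (fun k => 1 + a * hΔ.eigenvalues k)
        = 1 + a • Matrix.diagonal (RCLike.ofReal ∘ hΔ.eigenvalues) := by
      rw [← Matrix.diagonal_one, ← Matrix.diagonal_smul, ← Matrix.diagonal_add]
      congr 1
    rw [hd, Matrix.mul_add, Matrix.add_mul, Matrix.mul_one, hVV, Matrix.mul_smul,
      Matrix.smul_mul, hV, ← Unitary.conjStarAlgAut_apply (S := ℝ), ← hΔ.spectral_theorem]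
  rw [key]
  exact (Matrix.posSemidef_diagonal_iff.mpr hw).mul_mul_conjTranspose_same V

lemma rank_lt_card_of_mulVec_eq_zero {m : Type*} [Fintype m] (N : Matrix m m ℝ) {v : m → ℝ}
    (hv : v ≠ 0) (h : N *ᵥ v = 0) : N.rank < Fintype.card m := by
  have hker : LinearMap.ker N.mulVecLin ≠ ⊥ := by
    intro hbot
    exact hv (by simpa [hbot] using (LinearMap.mem_ker.mpr (by simpa using h) :
      v ∈ LinearMap.ker N.mulVecLin))
  have h1 := LinearMap.finrank_range_add_finrank_ker N.mulVecLin
  have h2 : 0 < Module.finrank ℝ (LinearMap.ker N.mulVecLin) := by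
    rw [Module.finrank_pos_iff]
    exact Submodule.nontrivial_iff_ne_bot.mpr hker
  have h3 : Module.finrank ℝ (m → ℝ) = Fintype.card m := Module.finrank_fintype_fun_eq_card ℝ
  rw [Matrix.rank]
  omega

lemma drop_aux {m : Type*} [Fintype m] [DecidableEq m] {Δ : Matrix m m ℝ} (hΔ : Δ.IsHermitian)
    (a : ℝ) (hw : ∀ k, 0 ≤ 1 + a * hΔ.eigenvalues k) (k0 : m)
    (h0 : 1 + a * hΔ.eigenvalues k0 = 0) :
    (1 + a • Δ).PosSemidef ∧ (1 + a • Δ).rank < Fintype.card m := by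
  refine ⟨one_add_smul_psd hΔ a hw, ?_⟩
  set v : m → ℝ := fun i => hΔ.eigenvectorBasis k0 i with hvdef
  have hv : v ≠ 0 := by
    intro h
    have h1 := hΔ.eigenvectorBasis.orthonormal.1 k0
    have : hΔ.eigenvectorBasis k0 = 0 := by
      ext i; exact congrFun h i
    rw [this] at h1; simp at h1
  refine rank_lt_card_of_mulVec_eq_zero _ hv ?_
  have hmv := hΔ.mulVec_eigenvectorBasis k0
  have hmv' : Δ *ᵥ v = hΔ.eigenvalues k0 • v := hmv
  rw [add_mulVec, one_mulVec, smul_mulVec, hmv']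
  ext i
  have h2 : (1 + a * hΔ.eigenvalues k0) * v i = 0 := by rw [h0, zero_mul]
  simp only [Pi.add_apply, Pi.smul_apply, smul_eq_mul, Pi.zero_apply]
  nlinarith [h2]

lemma exists_rank_drop {m : Type*} [Fintype m] [DecidableEq m] {Δ : Matrix m m ℝ}
    (hΔ : Δ.IsHermitian) (hne : Δ ≠ 0) :
    ∃ c t : ℝ, (c = 1 ∨ c = -1) ∧ 0 < t ∧ (1 + (t * c) • Δ).PosSemidef ∧
      (1 + (t * c) • Δ).rank < Fintype.card m := by
  have hμ : ∃ k, hΔ.eigenvalues k ≠ 0 := by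
    by_contra hc
    push_neg at hc
    apply hne
    have : Matrix.diagonal (RCLike.ofReal ∘ hΔ.eigenvalues) = (0 : Matrix m m ℝ) := by
      ext i j; by_cases h : i = j <;> simp [Matrix.diagonal, h, hc]
    rw [hΔ.spectral_theorem, this, map_zero]
  obtain ⟨k1, hk1⟩ := hμ
  haveI : Nonempty m := ⟨k1⟩
  set μ := hΔ.eigenvalues with hμdef
  obtain ⟨ki, _, hki⟩ := Finset.exists_mem_eq_inf' (Finset.univ_nonempty (α := m)) μ
  obtain ⟨ks, _, hks⟩ := Finset.exists_mem_eq_sup' (Finset.univ_nonempty (α := m)) μ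
  have hmin : ∀ k, μ ki ≤ μ k := fun k => hki ▸ Finset.inf'_le _ (Finset.mem_univ k)
  have hmax : ∀ k, μ k ≤ μ ks := fun k => hks ▸ Finset.le_sup' _ (Finset.mem_univ k)
  by_cases hneg : μ ki < 0
  · have h2 : (μ ki)⁻¹ < 0 := inv_lt_zero.mpr hneg
    refine ⟨1, -(μ ki)⁻¹, Or.inl rfl, by linarith, ?_⟩
    have hinv : μ ki * (μ ki)⁻¹ = 1 := mul_inv_cancel₀ (ne_of_lt hneg)
    have hw : ∀ k, 0 ≤ 1 + (-(μ ki)⁻¹ * 1) * μ k := fun k => by nlinarith [hmin k]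
    have h0 : 1 + (-(μ ki)⁻¹ * 1) * μ ki = 0 := by nlinarith
    exact drop_aux hΔ _ hw ki h0
  · push_neg at hneg
    have hk1pos : 0 < μ k1 :=
      lt_of_le_of_ne (le_trans hneg (hmin k1)) (Ne.symm hk1)
    have hMpos : 0 < μ ks := lt_of_lt_of_le hk1pos (hmax k1)
    have h2 : 0 < (μ ks)⁻¹ := by positivity
    have hinv : μ ks * (μ ks)⁻¹ = 1 := mul_inv_cancel₀ (ne_of_gt hMpos)
    refine ⟨-1, (μ ks)⁻¹, Or.inr rfl, h2, ?_⟩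
    have hw : ∀ k, 0 ≤ 1 + ((μ ks)⁻¹ * -1) * μ k := fun k => by nlinarith [hmax k]
    have h0 : 1 + ((μ ks)⁻¹ * -1) * μ ks = 0 := by nlinarith
    exact drop_aux hΔ _ hw ks h0

lemma exists_eps_psd {m : Type*} [Fintype m] [DecidableEq m] {Δ : Matrix m m ℝ}
    (hΔ : Δ.IsHermitian) [Nonempty m] :
    ∃ ε : ℝ, 0 < ε ∧ (1 + ε • Δ).PosSemidef ∧ (1 + (-ε) • Δ).PosSemidef := by
  set μ := hΔ.eigenvalues
  obtain ⟨ks, _, hks⟩ := Finset.exists_mem_eq_sup' (Finset.univ_nonempty (α := m)) (fun k => |μ k|)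
  have habs : ∀ k, |μ k| ≤ |μ ks| :=
    fun k => hks ▸ Finset.le_sup' (fun k => |μ k|) (Finset.mem_univ k)
  set C := |μ ks| with hC
  have hC0 : 0 ≤ C := abs_nonneg _
  refine ⟨(C + 1)⁻¹, by positivity, ?_, ?_⟩ <;>
  · refine one_add_smul_psd hΔ _ (fun k => ?_)
    have h1 := habs k
    have h2 := abs_le.mp (le_trans (le_refl |μ k|) h1)
    have h3 : (0:ℝ) < C + 1 := by linarith
    have h4 : (C+1) * (C+1)⁻¹ = 1 := mul_inv_cancel₀ (ne_of_gt h3)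
    have h5 : (0:ℝ) < (C+1)⁻¹ := by positivity
    nlinarith [h2.1, h2.2]

end Helpers

section GramSection

variable {n d : ℕ}

lemma euc_inner_eq (x y : EuclideanSpace ℝ (Fin d)) : (inner ℝ x y : ℝ) = ∑ m, x m * y m := by
  simp [PiLp.inner_apply]
  exact Finset.sum_congr rfl fun _ _ => mul_comm _ _

noncomputable def Gram (x : Fin n → EuclideanSpace ℝ (Fin d)) : Matrix (Fin n) (Fin n) ℝ :=
  Matrix.of fun i j => (inner ℝ (x i) (x j) : ℝ)

lemma gram_eq (x : Fin n → EuclideanSpace ℝ (Fin d)) :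
    Gram x = (Matrix.of fun i m => x i m) * (Matrix.of fun i m => x i m)ᴴ := by
  rw [real_conjT]
  ext i j
  simp [Gram, Matrix.mul_apply, euc_inner_eq]

lemma gram_psd (x : Fin n → EuclideanSpace ℝ (Fin d)) : (Gram x).PosSemidef := by
  rw [gram_eq]; exact Matrix.posSemidef_self_mul_conjTranspose _

lemma gram_diag (x : Fin n → EuclideanSpace ℝ (Fin d)) (i : Fin n) :
    Gram x i i = ‖x i‖ * ‖x i‖ := real_inner_self_eq_norm_mul_norm (x i)

lemma gram_rank_le (x : Fin n → EuclideanSpace ℝ (Fin d)) : (Gram x).rank ≤ d := by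
  rw [gram_eq]
  exact le_trans (Matrix.rank_mul_le_left _ _) (le_trans (Matrix.rank_le_card_width _) (by simp))

lemma exists_factor (X : Matrix (Fin n) (Fin n) ℝ) (hX : X.PosSemidef) (hr : X.rank ≤ d) :
    ∃ x : Fin n → EuclideanSpace ℝ (Fin d), ∀ i j, (inner ℝ (x i) (x j) : ℝ) = X i j := by
  have h := hX.1
  set μ := h.eigenvalues with hμ
  set U : Matrix (Fin n) (Fin n) ℝ := (h.eigenvectorUnitary : Matrix (Fin n) (Fin n) ℝ) with hU
  have hcard : Fintype.card {k // μ k ≠ 0} ≤ Fintype.card (Fin d) := by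
    rw [← h.rank_eq_card_non_zero_eigs] at *
    simpa using hr
  obtain ⟨E⟩ := Function.Embedding.nonempty_of_card_le hcard
  set a : {k // μ k ≠ 0} → Fin n → ℝ := fun k i => Real.sqrt (μ k) * U i k with ha
  refine ⟨fun i => (WithLp.toLp 2 (fun m => ∑ k : {k // μ k ≠ 0}, if E k = m then a k i else 0) :
    EuclideanSpace ℝ (Fin d)), fun i j => ?_⟩
  rw [euc_inner_eq]
  simp only [WithLp.ofLp_toLp]
  have step1 : ∀ m : Fin d,
      (∑ k : {k // μ k ≠ 0}, if E k = m then a k i else 0) *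
      (∑ l : {k // μ k ≠ 0}, if E l = m then a l j else 0)
      = ∑ k : {k // μ k ≠ 0}, ∑ l : {k // μ k ≠ 0},
          (if E k = m then a k i else 0) * (if E l = m then a l j else 0) := by
    intro m; rw [Finset.sum_mul_sum]
  rw [Finset.sum_congr rfl fun m _ => step1 m]
  rw [Finset.sum_comm]
  have step2 : ∀ k : {k // μ k ≠ 0},
      (∑ m : Fin d, ∑ l : {k // μ k ≠ 0},
        (if E k = m then a k i else 0) * (if E l = m then a l j else 0))
      = a k i * a k j := by
    intro k
    rw [Finset.sum_eq_single (E k)]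
    · rw [Finset.sum_eq_single k]
      · simp
      · intro l _ hl
        have hne : E l ≠ E k := fun hEq => hl (E.injective hEq)
        simp [hne]
      · simp
    · intro m _ hm
      apply Finset.sum_eq_zero
      intro l _
      rw [if_neg (Ne.symm hm), zero_mul]
    · simp
  rw [Finset.sum_congr rfl fun k _ => step2 k]
  have step3 : ∀ k : {k // μ k ≠ 0}, a k i * a k j = μ k * U i k * U j k := by
    intro k
    have : Real.sqrt (μ k) * Real.sqrt (μ k) = μ k :=
      Real.mul_self_sqrt (hX.eigenvalues_nonneg k)
    simp only [ha]; linear_combination (U i k * U j k) * this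
  rw [Finset.sum_congr rfl fun k _ => step3 k]
  rw [spectral_entry h i j]
  show ∑ k : {k // μ k ≠ 0}, μ k.1 * U i k.1 * U j k.1 = ∑ k : Fin n, μ k * U i k * U j k
  rw [← Finset.sum_subtype (Finset.univ.filter (fun k => μ k ≠ 0)) (by simp)
    (fun k => μ k * U i k * U j k)]
  exact Finset.sum_filter_of_ne (fun k _ hfk hμ0 => hfk (by simp [hμ0]))

noncomputable def fval (A X : Matrix (Fin n) (Fin n) ℝ) : ℝ := ∑ i, ∑ j, A i j * X i j

lemma fval_add_smul (A X M : Matrix (Fin n) (Fin n) ℝ) (t : ℝ) :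
    fval A (X + t • M) = fval A X + t * fval A M := by
  unfold fval
  rw [Finset.mul_sum, ← Finset.sum_add_distrib]
  refine Finset.sum_congr rfl fun i _ => ?_
  rw [Finset.mul_sum, ← Finset.sum_add_distrib]
  refine Finset.sum_congr rfl fun j _ => ?_
  simp only [Matrix.add_apply, Matrix.smul_apply, smul_eq_mul]
  ring

end GramSection

section Pataki
variable {n d : ℕ}

lemma small_balance {v w e : ℝ} (he : 0 < e) (h1 : |v + e*w| ≤ |v|) (h2 : |v + -e*w| ≤ |v|) :
    w = 0 := by
  have s1 : (v + e*w)*(v + e*w) ≤ v*v := by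
    have := mul_self_le_mul_self (abs_nonneg _) h1
    rwa [abs_mul_abs_self, abs_mul_abs_self] at this
  have s2 : (v + -e*w)*(v + -e*w) ≤ v*v := by
    have := mul_self_le_mul_self (abs_nonneg _) h2
    rwa [abs_mul_abs_self, abs_mul_abs_self] at this
  have hww : w * w ≤ 0 := by nlinarith [s1, s2, he, mul_pos he he]
  exact mul_self_eq_zero.mp (le_antisymm hww (mul_self_nonneg w))

set_option maxHeartbeats 1000000 in
lemma pataki (A X : Matrix (Fin n) (Fin n) ℝ) (hX : X.PosSemidef)
    (hrank : 2 * n < X.rank * (X.rank + 1))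
    (hmax : ∀ Y : Matrix (Fin n) (Fin n) ℝ, Y.PosSemidef → (∀ i, Y i i = X i i) →
      |fval A Y| ≤ |fval A X|) :
    ∃ Y : Matrix (Fin n) (Fin n) ℝ, Y.PosSemidef ∧ (∀ i, Y i i = X i i) ∧
      |fval A Y| = |fval A X| ∧ Y.rank < X.rank := by
  have h := hX.1
  set μ := h.eigenvalues with hμdef
  set U : Matrix (Fin n) (Fin n) ℝ := (h.eigenvectorUnitary : Matrix (Fin n) (Fin n) ℝ) with hUdef
  have hUU : star U * U = 1 := Matrix.mem_unitaryGroup_iff'.mp h.eigenvectorUnitary.2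
  have hrankS : X.rank = Fintype.card {k // μ k ≠ 0} := h.rank_eq_card_non_zero_eigs
  set B : Matrix (Fin n) {k // μ k ≠ 0} ℝ := Matrix.of (fun i k => Real.sqrt (μ k) * U i k)
    with hBdef
  -- B * Bᵀ = X
  have hBBt : B * Bᵀ = X := by
    ext i j
    rw [Matrix.mul_apply, spectral_entry h i j]
    have step : ∀ k : {k // μ k ≠ 0}, B i k * Bᵀ k j = μ k.1 * U i k.1 * U j k.1 := by
      intro k
      have hs : Real.sqrt (μ k) * Real.sqrt (μ k) = μ k :=
        Real.mul_self_sqrt (hX.eigenvalues_nonneg k)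
      simp only [hBdef, Matrix.transpose_apply, Matrix.of_apply]
      linear_combination (U i k.1 * U j k.1) * hs
    rw [Finset.sum_congr rfl fun k _ => step k]
    show ∑ k : {k // μ k ≠ 0}, μ k.1 * U i k.1 * U j k.1 = ∑ k : Fin n, μ k * U i k * U j k
    rw [← Finset.sum_subtype (Finset.univ.filter (fun k => μ k ≠ 0)) (by simp)
      (fun k => μ k * U i k * U j k)]
    exact Finset.sum_filter_of_ne (fun k _ hfk hμ0 => hfk (by simp [hμ0]))
  -- Bᵀ * B is an invertible diagonal
  have hBtB : Bᵀ * B = Matrix.diagonal (fun k : {k // μ k ≠ 0} => μ k.1) := by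
    ext k l
    rw [Matrix.mul_apply, Matrix.diagonal]
    have hUe : ∑ i, U i k.1 * U i l.1 = if (k.1 : Fin n) = l.1 then 1 else 0 := by
      have := congrFun (congrFun hUU k.1) l.1
      simpa [Matrix.mul_apply, Matrix.one_apply, Matrix.star_apply] using this
    have expand : ∀ i, Bᵀ k i * B i l = Real.sqrt (μ k) * Real.sqrt (μ l) * (U i k.1 * U i l.1) := by
      intro i; simp only [hBdef, Matrix.transpose_apply, Matrix.of_apply]; ring
    rw [Finset.sum_congr rfl fun i _ => expand i, ← Finset.mul_sum, hUe]
    by_cases hkl : k = l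
    · subst hkl
      simp [Real.mul_self_sqrt (hX.eigenvalues_nonneg k)]
      exact Real.mul_self_sqrt (hX.eigenvalues_nonneg k)
    · have : (k.1 : Fin n) ≠ l.1 := fun hc => hkl (Subtype.ext hc)
      simp [Matrix.of_apply, this, hkl]
  -- conjugation by B is injective
  have hBinj : ∀ N : Matrix {k // μ k ≠ 0} {k // μ k ≠ 0} ℝ, B * N * Bᵀ = 0 → N = 0 := by
    intro N hN
    have h1 : Bᵀ * (B * N * Bᵀ) * B = 0 := by rw [hN, Matrix.mul_zero, Matrix.zero_mul]
    have h2 : Matrix.diagonal (fun k : {k // μ k ≠ 0} => μ k.1) * N *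
        Matrix.diagonal (fun k : {k // μ k ≠ 0} => μ k.1) = 0 := by
      calc Matrix.diagonal _ * N * Matrix.diagonal _ = (Bᵀ * B) * N * (Bᵀ * B) := by rw [hBtB]
      _ = Bᵀ * (B * N * Bᵀ) * B := by noncomm_ring [Matrix.mul_assoc]
      _ = 0 := h1
    ext k l
    have e1 := congrFun (congrFun h2 k) l
    rw [Matrix.mul_diagonal, Matrix.diagonal_mul] at e1
    have e1' : μ k.1 * N k l * μ l.1 = 0 := by simpa using e1
    have hk := k.2
    have hl := l.2
    have : N k l * (μ k.1 * μ l.1) = 0 := by linear_combination e1'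
    rcases mul_eq_zero.mp this with h' | h'
    · simpa using h'
    · exact absurd (mul_eq_zero.mp h') (by push_neg; exact ⟨hk, hl⟩)
  -- nonemptiness of the support
  have hr1 : 0 < X.rank := by nlinarith [hrank]
  haveI hSne : Nonempty {k // μ k ≠ 0} := by
    rw [hrankS] at hr1
    exact Fintype.card_pos_iff.mp hr1
  -- the space of symmetric parameters is too big
  set P := {p : {k // μ k ≠ 0} × {k // μ k ≠ 0} // p.1 ≤ p.2} with hPdef
  have hcardP : n < Fintype.card P := by
    have e1 : Fintype.card P = Fintype.card (Sym2 {k // μ k ≠ 0}) :=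
      Fintype.card_congr Sym2.sortEquiv.symm
    have e2 : Fintype.card (Sym2 {k // μ k ≠ 0})
        = (Fintype.card {k // μ k ≠ 0} + 1).choose 2 := Sym2.card
    set r := Fintype.card {k // μ k ≠ 0} with hrdef
    have e3 : (r + 1).choose 2 = (r+1) * r / 2 := by
      rw [Nat.choose_two_right]; simp
    have e4 : (r * (r+1)) % 2 = 0 := Nat.even_iff.mp (Nat.even_mul_succ_self r)
    have e5 : 2 * n < r * (r + 1) := by have := hrank; rw [hrankS] at this; exact this
    have e6 : (r+1) * r = r * (r+1) := Nat.mul_comm _ _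
    omega
  -- build the symmetric perturbation from a kernel element
  set Δf : (P → ℝ) → Matrix {k // μ k ≠ 0} {k // μ k ≠ 0} ℝ := fun c => Matrix.of
    (fun k l => if hkl : k ≤ l then c ⟨(k, l), hkl⟩ else c ⟨(l, k), le_of_not_ge hkl⟩) with hΔf
  have hΔadd : ∀ c c', Δf (c + c') = Δf c + Δf c' := by
    intro c c'; ext k l
    by_cases hkl : k ≤ l <;> simp [hΔf, hkl]
  have hΔsmul : ∀ (t : ℝ) c, Δf (t • c) = t • Δf c := by
    intro t c; ext k l
    by_cases hkl : k ≤ l <;> simp [hΔf, hkl]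
  set L : (P → ℝ) →ₗ[ℝ] (Fin n → ℝ) :=
    { toFun := fun c => fun i => (B * Δf c * Bᵀ) i i
      map_add' := by
        intro c c'; funext i
        show (B * Δf (c + c') * Bᵀ) i i = (B * Δf c * Bᵀ) i i + (B * Δf c' * Bᵀ) i i
        rw [hΔadd, Matrix.mul_add, Matrix.add_mul]
        simp
      map_smul' := by
        intro t c; funext i
        show (B * Δf (t • c) * Bᵀ) i i = t * (B * Δf c * Bᵀ) i i
        rw [hΔsmul, Matrix.mul_smul, Matrix.smul_mul]
        simp } with hLdef
  have hker : ∃ c : P → ℝ, c ≠ 0 ∧ L c = 0 := by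
    by_contra hc
    push_neg at hc
    have hinj : Function.Injective L := by
      rw [← LinearMap.ker_eq_bot]
      refine (Submodule.eq_bot_iff _).mpr (fun c hcmem => ?_)
      by_contra hcz
      exact hc c hcz (LinearMap.mem_ker.mp hcmem)
    have := LinearMap.finrank_le_finrank_of_injective hinj
    rw [Module.finrank_fintype_fun_eq_card, Module.finrank_fintype_fun_eq_card] at this
    simp at this
    omega
  obtain ⟨c, hc0, hLc⟩ := hker
  set Δ := Δf c with hΔdef
  have hΔH : Δ.IsHermitian := by
    apply Matrix.ext
    intro k l
    rw [Matrix.conjTranspose_apply]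
    simp only [star_trivial]
    rcases le_total k l with hkl | hlk
    · by_cases heq : l ≤ k
      · have hkeq : k = l := le_antisymm hkl heq
        subst hkeq; rfl
      · simp [hΔdef, hΔf, hkl, heq]
    · by_cases heq : k ≤ l
      · have hkeq : k = l := le_antisymm heq hlk
        subst hkeq; rfl
      · simp [hΔdef, hΔf, hlk, heq]
  have hΔne : Δ ≠ 0 := by
    obtain ⟨p, hp⟩ := Function.ne_iff.mp hc0
    obtain ⟨⟨k, l⟩, hkl⟩ := p
    intro hΔ0
    apply hp
    have h1 : Δ k l = c ⟨(k, l), hkl⟩ := by simp [hΔdef, hΔf, hkl]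
    rw [hΔ0] at h1
    simpa using h1.symm
  set M := B * Δ * Bᵀ with hMdef
  have hMdiag : ∀ i, M i i = 0 := fun i => congrFun hLc i
  have hMne : M ≠ 0 := fun h0 => hΔne (hBinj Δ h0)
  have conj_expand : ∀ a : ℝ, B * (1 + a • Δ) * Bᵀ = X + a • M := by
    intro a
    rw [Matrix.mul_add, Matrix.mul_one, Matrix.add_mul, Matrix.mul_smul, Matrix.smul_mul,
      hBBt, hMdef, Matrix.mul_assoc]
  obtain ⟨ε, hε, hp1, hp2⟩ := exists_eps_psd hΔH
  have hpsd1 : (X + ε • M).PosSemidef := by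
    rw [← conj_expand]
    have := hp1.mul_mul_conjTranspose_same B
    rwa [real_conjT] at this
  have hpsd2 : (X + (-ε) • M).PosSemidef := by
    rw [← conj_expand]
    have := hp2.mul_mul_conjTranspose_same B
    rwa [real_conjT] at this
  have h1 := hmax _ hpsd1 (fun i => by simp [Matrix.add_apply, hMdiag i])
  have h2 := hmax _ hpsd2 (fun i => by simp [Matrix.add_apply, hMdiag i])
  rw [fval_add_smul] at h1 h2
  have hfM : fval A M = 0 := small_balance hε h1 h2
  obtain ⟨cc, t, hcc, ht, hpsdN, hrkN⟩ := exists_rank_drop hΔH hΔne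
  refine ⟨X + (t*cc) • M, ?_, ?_, ?_, ?_⟩
  · rw [← conj_expand]
    have := hpsdN.mul_mul_conjTranspose_same B
    rwa [real_conjT] at this
  · intro i; simp [Matrix.add_apply, hMdiag i]
  · rw [fval_add_smul, hfM, mul_zero, add_zero]
  · rw [← conj_expand, hrankS]
    calc (B * (1 + (t*cc) • Δ) * Bᵀ).rank
        = (B * ((1 + (t*cc) • Δ) * Bᵀ)).rank := by rw [Matrix.mul_assoc]
      _ ≤ ((1 + (t*cc) • Δ) * Bᵀ).rank := Matrix.rank_mul_le_right _ _
      _ ≤ (1 + (t*cc) • Δ).rank := Matrix.rank_mul_le_left _ _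
      _ < Fintype.card {k // μ k ≠ 0} := hrkN

end Pataki

section Assembly
variable {n d : ℕ}

lemma mem_semi_iff (A : Matrix (Fin n) (Fin n) ℝ) (d : ℕ) (r : ℝ) :
    (∃ x : Fin n → EuclideanSpace ℝ (Fin d), (∀ i, ‖x i‖ = 1) ∧ r = |fval A (Gram x)|) ↔
    (∃ X : Matrix (Fin n) (Fin n) ℝ, X.PosSemidef ∧ (∀ i, X i i = 1) ∧ X.rank ≤ d ∧
      r = |fval A X|) := by
  constructor
  · rintro ⟨x, hx, rfl⟩
    exact ⟨Gram x, gram_psd x, fun i => by rw [gram_diag, hx i, mul_one],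
      gram_rank_le x, rfl⟩
  · rintro ⟨X, hX, hdiag, hrank, rfl⟩
    obtain ⟨x, hx⟩ := exists_factor X hX hrank
    have hGX : Gram x = X := by
      ext i j; exact hx i j
    refine ⟨x, fun i => ?_, by rw [hGX]⟩
    have h1 : ‖x i‖ * ‖x i‖ = 1 := by
      rw [← gram_diag, hGX]; exact hdiag i
    rcases mul_self_eq_one_iff.mp h1 with h | h
    · exact h
    · nlinarith [norm_nonneg (x i)]

lemma mem_Gam_iff (A : Matrix (Fin n) (Fin n) ℝ) (d : ℕ) (r : ℝ) :
    (∃ x : Fin n → EuclideanSpace ℝ (Fin d), (∀ i, ‖x i‖ ≤ 1) ∧ r = |fval A (Gram x)|) ↔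
    (∃ X : Matrix (Fin n) (Fin n) ℝ, X.PosSemidef ∧ (∀ i, X i i ≤ 1) ∧ X.rank ≤ d ∧
      r = |fval A X|) := by
  constructor
  · rintro ⟨x, hx, rfl⟩
    refine ⟨Gram x, gram_psd x, fun i => ?_, gram_rank_le x, rfl⟩
    rw [gram_diag]
    nlinarith [hx i, norm_nonneg (x i)]
  · rintro ⟨X, hX, hdiag, hrank, rfl⟩
    obtain ⟨x, hx⟩ := exists_factor X hX hrank
    have hGX : Gram x = X := by ext i j; exact hx i j
    refine ⟨x, fun i => ?_, by rw [hGX]⟩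
    have h1 : ‖x i‖ * ‖x i‖ ≤ 1 := by rw [← gram_diag, hGX]; exact hdiag i
    nlinarith [norm_nonneg (x i)]

lemma bdd_semi (A : Matrix (Fin n) (Fin n) ℝ) (d : ℕ) :
    ∀ r ∈ {r | ∃ x : Fin n → EuclideanSpace ℝ (Fin d), (∀ i, ‖x i‖ ≤ 1) ∧
      r = |fval A (Gram x)|}, r ≤ ∑ i, ∑ j, |A i j| := by
  rintro r ⟨x, hx, rfl⟩
  calc |fval A (Gram x)| ≤ ∑ i, |∑ j, A i j * Gram x i j| :=
        Finset.abs_sum_le_sum_abs _ _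
    _ ≤ ∑ i, ∑ j, |A i j * Gram x i j| :=
        Finset.sum_le_sum fun i _ => Finset.abs_sum_le_sum_abs _ _
    _ ≤ ∑ i, ∑ j, |A i j| := by
        refine Finset.sum_le_sum fun i _ => Finset.sum_le_sum fun j _ => ?_
        rw [abs_mul]
        have h1 : |Gram x i j| ≤ 1 := by
          have := abs_real_inner_le_norm (x i) (x j)
          have h2 : ‖x i‖ * ‖x j‖ ≤ 1 :=
            mul_le_one₀ (hx i) (norm_nonneg _) (hx j)
          exact le_trans this h2
        nlinarith [abs_nonneg (A i j), abs_nonneg (Gram x i j)]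

set_option maxHeartbeats 1000000 in
lemma attain (A : Matrix (Fin n) (Fin n) ℝ) (Φ : EuclideanSpace ℝ (Fin n) → Prop)
    (hΦc : IsClosed {y : EuclideanSpace ℝ (Fin n) | Φ y})
    (hΦb : ∀ y, Φ y → ‖y‖ ≤ 1) (hΦne : ∃ y, Φ y) :
    ∃ x : Fin n → EuclideanSpace ℝ (Fin n), (∀ i, Φ (x i)) ∧
      ∀ z : Fin n → EuclideanSpace ℝ (Fin n), (∀ i, Φ (z i)) →
        |fval A (Gram z)| ≤ |fval A (Gram x)| := by
  set K : Set (Fin n → EuclideanSpace ℝ (Fin n)) := Set.univ.pi (fun _ => {y | Φ y}) with hK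
  have hcomp : IsCompact {y : EuclideanSpace ℝ (Fin n) | Φ y} :=
    (isCompact_closedBall (0 : EuclideanSpace ℝ (Fin n)) 1).of_isClosed_subset hΦc
      (fun y hy => mem_closedBall_zero_iff.mpr (hΦb y hy))
  have hKc : IsCompact K := isCompact_univ_pi fun _ => hcomp
  have hKne : K.Nonempty := ⟨fun _ => hΦne.choose, fun i _ => hΦne.choose_spec⟩
  have hφ : Continuous fun z : Fin n → EuclideanSpace ℝ (Fin n) => |fval A (Gram z)| := by
    have h1 : Continuous fun z : Fin n → EuclideanSpace ℝ (Fin n) => fval A (Gram z) := by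
      show Continuous fun z : Fin n → EuclideanSpace ℝ (Fin n) =>
        ∑ i, ∑ j, A i j * (inner ℝ (z i) (z j) : ℝ)
      refine continuous_finset_sum _ fun i _ => continuous_finset_sum _ fun j _ => ?_
      exact continuous_const.mul
        (Continuous.inner (𝕜 := ℝ) (continuous_apply i) (continuous_apply j))
    exact continuous_abs.comp h1
  obtain ⟨x, hxK, hxmax⟩ := hKc.exists_isMaxOn hKne hφ.continuousOn
  refine ⟨x, fun i => hxK i (Set.mem_univ i), fun z hz => ?_⟩
  exact hxmax (fun i _ => hz i)

end Assembly

section Keys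
variable {n d : ℕ}

lemma semi_key (A : Matrix (Fin n) (Fin n) ℝ) (hd : 2 * n < d * (d + 1)) (hn : 0 < n) :
    ∃ r ∈ {s | ∃ x : Fin n → EuclideanSpace ℝ (Fin d), (∀ i, ‖x i‖ = 1) ∧
        s = |fval A (Gram x)|},
      ∀ r' ∈ {s | ∃ x : Fin n → EuclideanSpace ℝ (Fin n), (∀ i, ‖x i‖ = 1) ∧
        s = |fval A (Gram x)|}, r' ≤ r := by
  obtain ⟨x, hxΦ, hxmax⟩ := attain A (fun y => ‖y‖ = 1)
    (isClosed_eq continuous_norm continuous_const) (fun y hy => le_of_eq hy)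
    ⟨EuclideanSpace.single ⟨0, hn⟩ (1:ℝ), by simp [EuclideanSpace.norm_single]⟩
  set v := |fval A (Gram x)| with hv
  obtain ⟨Xs, hXs1, hXs2, hXs3, hXs4⟩ := (mem_semi_iff A n v).mp ⟨x, hxΦ, rfl⟩
  set R := {ρ : ℕ | ∃ X : Matrix (Fin n) (Fin n) ℝ, X.PosSemidef ∧ (∀ i, X i i = 1) ∧
    |fval A X| = v ∧ X.rank = ρ} with hR
  have hRne : R.Nonempty := ⟨Xs.rank, Xs, hXs1, hXs2, hXs4.symm, rfl⟩
  obtain ⟨X0, hpsd0, hdiag0, hfv0, hrk0⟩ := Nat.sInf_mem hRne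
  have hmax0 : ∀ Y : Matrix (Fin n) (Fin n) ℝ, Y.PosSemidef → (∀ i, Y i i = X0 i i) →
      |fval A Y| ≤ |fval A X0| := by
    intro Y hY hYd
    rw [hfv0]
    obtain ⟨z, hz, hzeq⟩ := (mem_semi_iff A n |fval A Y|).mpr
      ⟨Y, hY, fun i => by rw [hYd i]; exact hdiag0 i,
        le_trans (Matrix.rank_le_card_height Y) (by simp), rfl⟩
    rw [hzeq]
    exact hxmax z hz
  have hr0 : X0.rank ≤ d := by
    by_contra hgt
    push_neg at hgt
    have h2 : 2 * n < X0.rank * (X0.rank + 1) :=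
      lt_of_lt_of_le hd (Nat.mul_le_mul (le_of_lt hgt) (by omega))
    obtain ⟨Y, hYpsd, hYdiag, hYfv, hYrank⟩ := pataki A X0 hpsd0 h2 hmax0
    have hmem : Y.rank ∈ R := ⟨Y, hYpsd, fun i => by rw [hYdiag i]; exact hdiag0 i,
      by rw [hYfv]; exact hfv0, rfl⟩
    have := Nat.sInf_le hmem
    omega
  refine ⟨v, (mem_semi_iff A d v).mpr ⟨X0, hpsd0, hdiag0, hr0, hfv0.symm⟩, ?_⟩
  rintro r' ⟨z, hz, rfl⟩
  exact hxmax z hz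

lemma Gam_key (A : Matrix (Fin n) (Fin n) ℝ) (hd : 2 * n < d * (d + 1)) :
    ∃ r ∈ {s | ∃ x : Fin n → EuclideanSpace ℝ (Fin d), (∀ i, ‖x i‖ ≤ 1) ∧
        s = |fval A (Gram x)|},
      ∀ r' ∈ {s | ∃ x : Fin n → EuclideanSpace ℝ (Fin n), (∀ i, ‖x i‖ ≤ 1) ∧
        s = |fval A (Gram x)|}, r' ≤ r := by
  obtain ⟨x, hxΦ, hxmax⟩ := attain A (fun y => ‖y‖ ≤ 1)
    (isClosed_le continuous_norm continuous_const) (fun y hy => hy)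
    ⟨0, by simp⟩
  set v := |fval A (Gram x)| with hv
  obtain ⟨Xs, hXs1, hXs2, hXs3, hXs4⟩ := (mem_Gam_iff A n v).mp ⟨x, hxΦ, rfl⟩
  set R := {ρ : ℕ | ∃ X : Matrix (Fin n) (Fin n) ℝ, X.PosSemidef ∧ (∀ i, X i i ≤ 1) ∧
    |fval A X| = v ∧ X.rank = ρ} with hR
  have hRne : R.Nonempty := ⟨Xs.rank, Xs, hXs1, hXs2, hXs4.symm, rfl⟩
  obtain ⟨X0, hpsd0, hdiag0, hfv0, hrk0⟩ := Nat.sInf_mem hRne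
  have hmax0 : ∀ Y : Matrix (Fin n) (Fin n) ℝ, Y.PosSemidef → (∀ i, Y i i = X0 i i) →
      |fval A Y| ≤ |fval A X0| := by
    intro Y hY hYd
    rw [hfv0]
    obtain ⟨z, hz, hzeq⟩ := (mem_Gam_iff A n |fval A Y|).mpr
      ⟨Y, hY, fun i => by rw [hYd i]; exact hdiag0 i,
        le_trans (Matrix.rank_le_card_height Y) (by simp), rfl⟩
    rw [hzeq]
    exact hxmax z hz
  have hr0 : X0.rank ≤ d := by
    by_contra hgt
    push_neg at hgt
    have h2 : 2 * n < X0.rank * (X0.rank + 1) :=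
      lt_of_lt_of_le hd (Nat.mul_le_mul (le_of_lt hgt) (by omega))
    obtain ⟨Y, hYpsd, hYdiag, hYfv, hYrank⟩ := pataki A X0 hpsd0 h2 hmax0
    have hmem : Y.rank ∈ R := ⟨Y, hYpsd, fun i => by rw [hYdiag i]; exact hdiag0 i,
      by rw [hYfv]; exact hfv0, rfl⟩
    have := Nat.sInf_le hmem
    omega
  refine ⟨v, (mem_Gam_iff A d v).mpr ⟨X0, hpsd0, hdiag0, hr0, hfv0.symm⟩, ?_⟩
  rintro r' ⟨z, hz, rfl⟩
  exact hxmax z hz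

end Keys


/-- If d(d+1)/2 > n then the Grothendieck d-(semi)norms have already stabilized. -/
theorem grothendieck_norms_stabilize (n d : ℕ) (hd : 2 * n < d * (d + 1))
    (A : Matrix (Fin n) (Fin n) ℝ) (hA : A.IsSymm) :
    gammaSemi d A = gammaSemi n A ∧ GammaNorm d A = GammaNorm n A := by
  have hd0 : 0 < d := by
    rcases Nat.eq_zero_or_pos d with h | h
    · subst h; simp at hd
    · exact h
  have hgs : ∀ e : ℕ, gammaSemi e A = sSup {r | ∃ x : Fin n → EuclideanSpace ℝ (Fin e),
      (∀ i, ‖x i‖ = 1) ∧ r = |fval A (Gram x)|} := fun e => rfl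
  have hGs : ∀ e : ℕ, GammaNorm e A = sSup {r | ∃ x : Fin n → EuclideanSpace ℝ (Fin e),
      (∀ i, ‖x i‖ ≤ 1) ∧ r = |fval A (Gram x)|} := fun e => rfl
  have hbdd : ∀ e : ℕ, BddAbove {r | ∃ x : Fin n → EuclideanSpace ℝ (Fin e),
      (∀ i, ‖x i‖ = 1) ∧ r = |fval A (Gram x)|} := by
    intro e
    refine ⟨∑ i, ∑ j, |A i j|, fun r hr => ?_⟩
    obtain ⟨x, hx, rfl⟩ := hr
    exact bdd_semi A e _ ⟨x, fun i => le_of_eq (hx i), rfl⟩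
  have hbddG : ∀ e : ℕ, BddAbove {r | ∃ x : Fin n → EuclideanSpace ℝ (Fin e),
      (∀ i, ‖x i‖ ≤ 1) ∧ r = |fval A (Gram x)|} := by
    intro e
    refine ⟨∑ i, ∑ j, |A i j|, fun r hr => ?_⟩
    exact bdd_semi A e _ hr
  constructor
  · rcases Nat.eq_zero_or_pos n with hn | hn
    · subst hn
      have hz : ∀ e : ℕ, gammaSemi e A = 0 := by
        intro e
        rw [hgs e]
        have hset : {r | ∃ x : Fin 0 → EuclideanSpace ℝ (Fin e),
            (∀ i, ‖x i‖ = 1) ∧ r = |fval A (Gram x)|} = {(0:ℝ)} := by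
          ext r
          simp only [Set.mem_setOf_eq, Set.mem_singleton_iff]
          constructor
          · rintro ⟨xx, _, rfl⟩
            simp [fval]
          · intro hr
            exact ⟨fun i0 => i0.elim0, fun i0 => i0.elim0, by simp [fval, hr]⟩
        rw [hset, csSup_singleton]
      rw [hz d, hz 0]
    · rw [hgs d, hgs n]
      apply le_antisymm
      · apply csSup_le_csSup (hbdd n)
        · exact ⟨_, ⟨fun _ => EuclideanSpace.single ⟨0, hd0⟩ (1:ℝ),
            fun i => by simp [EuclideanSpace.norm_single], rfl⟩⟩
        · intro r hr
          obtain ⟨X, hpsd, hdiag, _, hrfl⟩ := (mem_semi_iff A d r).mp hr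
          exact (mem_semi_iff A n r).mpr ⟨X, hpsd, hdiag,
            le_trans (Matrix.rank_le_card_height X) (by simp), hrfl⟩
      · obtain ⟨r, hrd, hub⟩ := semi_key A hd hn
        refine csSup_le ⟨_, ⟨fun _ => EuclideanSpace.single ⟨0, hn⟩ (1:ℝ),
            fun i => by simp [EuclideanSpace.norm_single], rfl⟩⟩
          (fun r' hr' => le_trans (hub r' hr') (le_csSup (hbdd d) hrd))
  · rw [hGs d, hGs n]
    apply le_antisymm
    · apply csSup_le_csSup (hbddG n)
      · exact ⟨_, ⟨fun _ => 0, fun i => by simp, rfl⟩⟩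
      · intro r hr
        obtain ⟨X, hpsd, hdiag, _, hrfl⟩ := (mem_Gam_iff A d r).mp hr
        exact (mem_Gam_iff A n r).mpr ⟨X, hpsd, hdiag,
          le_trans (Matrix.rank_le_card_height X) (by simp), hrfl⟩
    · obtain ⟨r, hrd, hub⟩ := Gam_key A hd
      refine csSup_le ⟨_, ⟨fun _ => 0, fun i => by simp, rfl⟩⟩
        (fun r' hr' => le_trans (hub r' hr') (le_csSup (hbddG d) hrd))
end

section
/- Every symmetric diagonally dominant matrix A ∈ S^n (real, with a_{ii} ≥ ∑_{j≠i} |a_{ij}| for all i) admits a unique decomposition A = H + L where H is diagonally dominant with all entries nonnegative, L satisfies L𝟙 = 0 and ℓ_{ij} ≤ 0 for i ≠ j (i.e. L is a weighted graph Laplacian), and h_{ij} ℓ_{ij} = 0 for all i ≠ j. -/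
open Finset

/-- Unique decomposition of a symmetric diagonally dominant matrix as a sum of a
nonnegative diagonally dominant matrix and a weighted graph Laplacian with
disjoint off-diagonal supports. -/
theorem diagDominant_decomposition (n : ℕ) (A : Matrix (Fin n) (Fin n) ℝ)
    (hA : A.IsSymm) (hdd : ∀ i, ∑ j ∈ univ.erase i, |A i j| ≤ A i i) :
    ∃! HL : Matrix (Fin n) (Fin n) ℝ × Matrix (Fin n) (Fin n) ℝ,
      A = HL.1 + HL.2 ∧
      HL.1.IsSymm ∧ (∀ i j, 0 ≤ HL.1 i j) ∧
      (∀ i, ∑ j ∈ univ.erase i, |HL.1 i j| ≤ HL.1 i i) ∧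
      HL.2.IsSymm ∧ HL.2.mulVec (fun _ => (1 : ℝ)) = 0 ∧
      (∀ i j, i ≠ j → HL.2 i j ≤ 0) ∧
      (∀ i j, i ≠ j → HL.1 i j * HL.2 i j = 0) := by
  classical
  set H : Matrix (Fin n) (Fin n) ℝ :=
    fun i j => if i = j then A i i + ∑ k ∈ univ.erase i, min (A i k) 0
      else max (A i j) 0 with hHdef
  set L : Matrix (Fin n) (Fin n) ℝ :=
    fun i j => if i = j then -∑ k ∈ univ.erase i, min (A i k) 0
      else min (A i j) 0 with hLdef
  have habs : ∀ a : ℝ, max a 0 - min a 0 = |a| := fun a => by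
    rcases le_total a 0 with h | h <;>
      simp [max_eq_right h, min_eq_left h, max_eq_left h, min_eq_right h,
        abs_of_nonpos, abs_of_nonneg, h]
  have hsym : ∀ i j : Fin n, A j i = A i j := fun i j => hA.apply i j
  refine ⟨(H, L), ⟨?_, ?_, ?_, ?_, ?_, ?_, ?_, ?_⟩, ?_⟩
  · -- A = H + L
    ext i j
    by_cases h : i = j
    · subst h; rw [Matrix.add_apply]; simp only [Matrix.add_apply, hHdef, hLdef, if_true, eq_self_iff_true]; ring
    · rw [Matrix.add_apply]; simp only [Matrix.add_apply, hHdef, hLdef, if_neg h]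
      rw [max_add_min]; ring
  · -- H symm
    rw [Matrix.IsSymm]; ext i j
    by_cases h : i = j
    · subst h; rfl
    · rw [Matrix.transpose_apply]; simp only [Matrix.transpose_apply, hHdef, if_neg h, if_neg (Ne.symm h), hsym]
  · -- H nonneg
    intro i j
    by_cases h : i = j
    · subst h; simp only [hHdef, if_pos rfl]
      have h1 : ∀ k ∈ univ.erase i, -|A i k| ≤ min (A i k) 0 := fun k _ =>
        le_min (neg_abs_le _) (neg_nonpos.mpr (abs_nonneg _))
      have h2 := Finset.sum_le_sum h1
      rw [Finset.sum_neg_distrib] at h2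
      linarith [hdd i]
    · simp only [hHdef, if_neg h]; exact le_max_right _ _
  · -- H diagonally dominant
    intro i
    have h1 : ∑ j ∈ univ.erase i, |H i j| = ∑ j ∈ univ.erase i, max (A i j) 0 := by
      refine Finset.sum_congr rfl fun j hj => ?_
      have hij : i ≠ j := (Finset.mem_erase.mp hj).1.symm
      simp only [hHdef, if_neg hij]
      exact abs_of_nonneg (le_max_right _ _)
    have h2 : ∑ j ∈ univ.erase i, (max (A i j) 0 - min (A i j) 0)
        = ∑ j ∈ univ.erase i, |A i j| :=
      Finset.sum_congr rfl fun j _ => habs _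
    rw [Finset.sum_sub_distrib] at h2
    simp only [hHdef, if_pos rfl]
    rw [h1]
    linarith [hdd i]
  · -- L symm
    rw [Matrix.IsSymm]; ext i j
    by_cases h : i = j
    · subst h; rfl
    · rw [Matrix.transpose_apply]; simp only [Matrix.transpose_apply, hLdef, if_neg h, if_neg (Ne.symm h), hsym]
  · -- L mulVec
    funext i
    simp only [Matrix.mulVec, dotProduct, mul_one, Pi.zero_apply]
    rw [← Finset.sum_erase_add _ _ (Finset.mem_univ i)]
    have h1 : ∑ j ∈ univ.erase i, L i j = ∑ j ∈ univ.erase i, min (A i j) 0 := by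
      refine Finset.sum_congr rfl fun j hj => ?_
      have hij : i ≠ j := (Finset.mem_erase.mp hj).1.symm
      simp [hLdef, if_neg hij]
    rw [h1]
    simp [hLdef]
  · -- L off-diag nonpos
    intro i j h
    simp only [hLdef, if_neg h]; exact min_le_right _ _
  · -- disjoint supports
    intro i j h
    simp only [hHdef, hLdef, if_neg h]
    rcases le_total (A i j) 0 with hc | hc
    · rw [max_eq_right hc]; ring
    · rw [min_eq_right hc]; ring
  · -- uniqueness
    rintro ⟨H', L'⟩ ⟨heq, hHs, hHnn, hHdd, hLs, hLv, hLnp, hdisj⟩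
    have hoff : ∀ i j, i ≠ j → H' i j = max (A i j) 0 ∧ L' i j = min (A i j) 0 := by
      intro i j hij
      have hsum : H' i j + L' i j = A i j := by
        have := congrFun (congrFun heq i) j
        simp only [Matrix.add_apply] at this
        linarith
      rcases mul_eq_zero.mp (hdisj i j hij) with h0 | h0
      · have h0' : H' i j = 0 := h0
        have hL : L' i j = A i j := by linarith
        have hle : A i j ≤ 0 := by
          have := hLnp i j hij; rw [show (H', L').2 i j = L' i j from rfl, hL] at this
          exact this
        exact ⟨by rw [h0', max_eq_right hle], by rw [hL, min_eq_left hle]⟩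
      · have h0' : L' i j = 0 := h0
        have hH : H' i j = A i j := by linarith
        have hge : 0 ≤ A i j := by
          have := hHnn i j; rw [show (H', L').1 i j = H' i j from rfl, hH] at this
          exact this
        exact ⟨by rw [hH, max_eq_left hge], by rw [h0', min_eq_right hge]⟩
    have hLdiag : ∀ i, L' i i = -∑ k ∈ univ.erase i, min (A i k) 0 := by
      intro i
      have hv := congrFun hLv i
      simp only [Matrix.mulVec, dotProduct, mul_one, Pi.zero_apply] at hv
      rw [← Finset.sum_erase_add _ _ (Finset.mem_univ i)] at hv
      have h1 : ∑ j ∈ univ.erase i, L' i j = ∑ j ∈ univ.erase i, min (A i j) 0 :=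
        Finset.sum_congr rfl fun j hj =>
          (hoff i j (Finset.mem_erase.mp hj).1.symm).2
      linarith [h1 ▸ hv]
    have hLeq : L' = L := by
      ext i j
      by_cases h : i = j
      · subst h; rw [hLdiag i]; simp [hLdef]
      · rw [(hoff i j h).2]; simp [hLdef, if_neg h]
    have hHeq : H' = H := by
      ext i j
      by_cases h : i = j
      · subst h
        have hsum : H' i i + L' i i = A i i := by
          have := congrFun (congrFun heq i) i
          simp only [Matrix.add_apply] at this
          linarith
        rw [hLdiag i] at hsum
        simp only [hHdef, if_pos rfl]
        linarith
      · rw [(hoff i j h).1]; simp [hHdef, if_neg h]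
    exact Prod.ext hHeq hLeq
end

section
/- Let A ∈ S^n be real symmetric with all diagonal entries nonnegative. Then max_{x ∈ {−1,1}^n} xᵀAx = max_{x ∈ [−1,1]^n} xᵀAx, and max { tr(AX) : X PSD, x_{ii} = 1 ∀i } = max { tr(AX) : X PSD, x_{ii} ≤ 1 ∀i }. -/
open scoped Matrix

open Finset

private lemma quad_update {n : ℕ} (A : Matrix (Fin n) (Fin n) ℝ) (x : Fin n → ℝ)
    (i : Fin n) (t : ℝ) :
    (Function.update x i t) ⬝ᵥ A.mulVec (Function.update x i t)
      = A i i * t^2 + (∑ j ∈ univ.erase i, (A i j + A j i) * x j) * t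
        + ∑ j ∈ univ.erase i, ∑ k ∈ univ.erase i, x j * (A j k * x k) := by
  simp only [dotProduct, Matrix.mulVec, Finset.mul_sum]
  rw [← Finset.add_sum_erase _ _ (Finset.mem_univ i)]
  rw [← Finset.add_sum_erase _
    (fun k => Function.update x i t i * (A i k * Function.update x i t k)) (Finset.mem_univ i)]
  simp only [Function.update_self]
  have h1 : ∀ j ∈ univ.erase i, Function.update x i t j = x j := by
    intro j hj
    exact Function.update_of_ne (Finset.ne_of_mem_erase hj) _ _
  rw [Finset.sum_congr rfl (fun j hj => by rw [h1 j hj])]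
  have h2 : ∀ j ∈ univ.erase i,
      (∑ k, Function.update x i t j * (A j k * Function.update x i t k))
        = x j * (A j i * t) + ∑ k ∈ univ.erase i, x j * (A j k * x k) := by
    intro j hj
    rw [h1 j hj, ← Finset.add_sum_erase _ _ (Finset.mem_univ i), Function.update_self]
    congr 1
    exact Finset.sum_congr rfl (fun k hk => by rw [h1 k hk])
  rw [Finset.sum_congr rfl h2, Finset.sum_add_distrib]
  rw [Finset.sum_mul (univ.erase i) (fun j => (A i j + A j i) * x j) t]
  have h3 : ∑ k ∈ univ.erase i, t * (A i k * x k) + ∑ j ∈ univ.erase i, x j * (A j i * t)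
      = ∑ j ∈ univ.erase i, (A i j + A j i) * x j * t := by
    rw [← Finset.sum_add_distrib]
    exact Finset.sum_congr rfl (fun j _ => by ring)
  have h4 : t * (A i i * t) = A i i * t ^ 2 := by ring
  linarith [h3, h4]

private lemma update_le_max {n : ℕ} (A : Matrix (Fin n) (Fin n) ℝ) (x : Fin n → ℝ)
    (i : Fin n) (ha : 0 ≤ A i i) (ht : |x i| ≤ 1) :
    x ⬝ᵥ A.mulVec x ≤
      max ((Function.update x i 1) ⬝ᵥ A.mulVec (Function.update x i 1))
        ((Function.update x i (-1)) ⬝ᵥ A.mulVec (Function.update x i (-1))) := by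
  have hq := quad_update A x i (x i)
  rw [Function.update_eq_self] at hq
  rw [max_def, quad_update A x i 1, quad_update A x i (-1), hq]
  set b := ∑ j ∈ univ.erase i, (A i j + A j i) * x j with hb
  set c := ∑ j ∈ univ.erase i, ∑ k ∈ univ.erase i, x j * (A j k * x k) with hc
  obtain ⟨h1, h2⟩ := abs_le.mp ht
  have hsq : (x i) ^ 2 ≤ 1 := by nlinarith
  split_ifs with h
  · nlinarith
  · push_neg at h
    nlinarith

/-- Rounding lemma: every point of the cube is dominated by a vertex. -/
private lemma round_to_vertex {n : ℕ} (A : Matrix (Fin n) (Fin n) ℝ)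
    (hdiag : ∀ i, 0 ≤ A i i) :
    ∀ (m : ℕ) (x : Fin n → ℝ), (∀ i, |x i| ≤ 1) →
      (univ.filter (fun i => ¬(x i = 1 ∨ x i = -1))).card ≤ m →
      ∃ y : Fin n → ℝ, (∀ i, y i = 1 ∨ y i = -1) ∧
        x ⬝ᵥ A.mulVec x ≤ y ⬝ᵥ A.mulVec y := by
  intro m
  induction m with
  | zero =>
    intro x hx hcard
    refine ⟨x, fun i => ?_, le_refl _⟩
    by_contra hi
    have : i ∈ univ.filter (fun i => ¬(x i = 1 ∨ x i = -1)) := by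
      simp only [Finset.mem_filter, Finset.mem_univ, true_and]; exact hi
    have := Finset.card_pos.mpr ⟨i, this⟩
    omega
  | succ m ih =>
    intro x hx hcard
    by_cases hall : ∀ i, x i = 1 ∨ x i = -1
    · exact ⟨x, hall, le_refl _⟩
    · push_neg at hall
      obtain ⟨i, hi⟩ := hall
      have hmax := update_le_max A x i (hdiag i) (hx i)
      -- pick the better of the two updates
      set y1 := Function.update x i (1 : ℝ)
      set y2 := Function.update x i (-1 : ℝ)
      have hkey : ∃ t : ℝ, (t = 1 ∨ t = -1) ∧
          x ⬝ᵥ A.mulVec x ≤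
            (Function.update x i t) ⬝ᵥ A.mulVec (Function.update x i t) := by
        rcases le_total (y2 ⬝ᵥ A.mulVec y2) (y1 ⬝ᵥ A.mulVec y1) with h | h
        · exact ⟨1, Or.inl rfl, le_trans hmax (by rw [max_eq_left h])⟩
        · exact ⟨-1, Or.inr rfl, le_trans hmax (by rw [max_eq_right h])⟩
      obtain ⟨t, ht, hle⟩ := hkey
      set x' := Function.update x i t with hx'
      have hx'bound : ∀ j, |x' j| ≤ 1 := by
        intro j
        by_cases hj : j = i
        · subst hj
          rcases ht with rfl | rfl <;> simp [hx', Function.update_self]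
        · rw [hx', Function.update_of_ne hj]
          exact hx j
      have hsubset : (univ.filter (fun j => ¬(x' j = 1 ∨ x' j = -1))) ⊆
          (univ.filter (fun j => ¬(x j = 1 ∨ x j = -1))).erase i := by
        intro j hj
        simp only [Finset.mem_filter, Finset.mem_univ, true_and] at hj
        rw [Finset.mem_erase]
        constructor
        · rintro rfl
          exact hj (by rw [hx', Function.update_self]; exact ht)
        · simp only [Finset.mem_filter, Finset.mem_univ, true_and]
          by_cases hji : j = i
          · exfalso; subst hji
            exact hj (by rw [hx', Function.update_self]; exact ht)
          · rwa [hx', Function.update_of_ne hji] at hj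
      have hicard : i ∈ univ.filter (fun j => ¬(x j = 1 ∨ x j = -1)) := by
        simp only [Finset.mem_filter, Finset.mem_univ, true_and]; exact not_or.mpr hi
      have hcard' : (univ.filter (fun j => ¬(x' j = 1 ∨ x' j = -1))).card ≤ m := by
        have h1 := Finset.card_le_card hsubset
        have h2 := Finset.card_erase_of_mem hicard
        have h3 := Finset.card_pos.mpr ⟨i, hicard⟩
        omega
      obtain ⟨y, hy, hle2⟩ := ih x' hx'bound hcard'
      exact ⟨y, hy, le_trans hle hle2⟩

private lemma sdp_round {n : ℕ} (A : Matrix (Fin n) (Fin n) ℝ)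
    (hdiag : ∀ i, 0 ≤ A i i) (X : Matrix (Fin n) (Fin n) ℝ)
    (hX : X.PosSemidef) (hXd : ∀ i, X i i ≤ 1) :
    ∃ Y : Matrix (Fin n) (Fin n) ℝ, Y.PosSemidef ∧ (∀ i, Y i i = 1) ∧
      (A * X).trace ≤ (A * Y).trace := by
  set d : Fin n → ℝ := fun i => 1 - X i i with hd
  refine ⟨X + Matrix.diagonal d, ?_, ?_, ?_⟩
  · exact hX.add (Matrix.posSemidef_diagonal_iff.mpr (fun i => by simp [hd, hXd i]))
  · intro i
    simp [hd, Matrix.diagonal_apply_eq]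
  · rw [mul_add, Matrix.trace_add]
    have : 0 ≤ (A * Matrix.diagonal d).trace := by
      rw [Matrix.trace]
      refine Finset.sum_nonneg (fun i _ => ?_)
      have : (A * Matrix.diagonal d) i i = A i i * d i := by
        rw [Matrix.mul_apply]
        simp [Matrix.diagonal, Finset.sum_ite_eq' univ i (fun j => A i j * d j)]
      rw [Matrix.diag_apply, this]
      exact mul_nonneg (hdiag i) (by simp [hd, hXd i])
    linarith

/-- For a symmetric matrix with nonnegative diagonal, the quadratic maximum over
the cube equals that over its vertices, and the SDP relaxation with unit
diagonal equals that with diagonal at most one. -/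
theorem quadratic_cube_vertex_and_sdp (n : ℕ) (A : Matrix (Fin n) (Fin n) ℝ)
    (hA : A.IsSymm) (hdiag : ∀ i, 0 ≤ A i i) :
    sSup { r | ∃ x : Fin n → ℝ, (∀ i, x i = 1 ∨ x i = -1) ∧ r = x ⬝ᵥ A.mulVec x } =
      sSup { r | ∃ x : Fin n → ℝ, (∀ i, |x i| ≤ 1) ∧ r = x ⬝ᵥ A.mulVec x } ∧
    sSup { r | ∃ X : Matrix (Fin n) (Fin n) ℝ, X.PosSemidef ∧ (∀ i, X i i = 1) ∧
        r = (A * X).trace } =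
      sSup { r | ∃ X : Matrix (Fin n) (Fin n) ℝ, X.PosSemidef ∧ (∀ i, X i i ≤ 1) ∧
        r = (A * X).trace } := by
  constructor
  · apply csSup_eq_csSup_of_forall_exists_le
    · rintro r ⟨x, hx, rfl⟩
      refine ⟨x ⬝ᵥ A.mulVec x, ⟨x, fun i => ?_, rfl⟩, le_refl _⟩
      rcases hx i with h | h <;> rw [h] <;> norm_num
    · rintro r ⟨x, hx, rfl⟩
      obtain ⟨y, hy, hle⟩ := round_to_vertex A hdiag
        ((univ.filter (fun i => ¬(x i = 1 ∨ x i = -1))).card) x hx (le_refl _)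
      exact ⟨y ⬝ᵥ A.mulVec y, ⟨y, hy, rfl⟩, hle⟩
  · apply csSup_eq_csSup_of_forall_exists_le
    · rintro r ⟨X, hX, hXd, rfl⟩
      exact ⟨(A * X).trace, ⟨X, hX, fun i => le_of_eq (hXd i), rfl⟩, le_refl _⟩
    · rintro r ⟨X, hX, hXd, rfl⟩
      obtain ⟨Y, hY, hYd, hle⟩ := sdp_round A hdiag X hX hXd
      exact ⟨(A * Y).trace, ⟨Y, hY, hYd, rfl⟩, hle⟩
end
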